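/- Let E be a finite directed graph and let u ∈ U_E be a unitary belonging to F_E. Then the endomorphism λ_u is injective. -/

import Mathlib

/-- A finite directed graph. -/
structure FinDirGraph where
  V : Type
  E : Type
  [instFV : Fintype V]
  [instFE : Fintype E]
  [instDV : DecidableEq V]
  [instDE : DecidableEq E]
  r : E → V
  s : E → V

attribute [instance] FinDirGraph.instFV FinDirGraph.instFE FinDirGraph.instDV FinDirGraph.instDE

namespace FinDirGraph

variable (G : FinDirGraph)

/-- `G.IsPathFrom v l` : the list of edges `l` forms a path starting at vertex `v`. -/
def IsPathFrom : G.V → List G.E → Prop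
  | _, [] => True
  | v, e :: l => G.s e = v ∧ IsPathFrom (G.r e) l

/-- The terminal vertex of a list of edges starting at `v`. -/
def rangeFrom : G.V → List G.E → G.V
  | v, [] => v
  | _, e :: l => rangeFrom (G.r e) l

/-- A finite path in the graph `G`; vertices are the paths of length `0`. -/
structure Path where
  src : G.V
  edges : List G.E
  ok : G.IsPathFrom src edges

variable {G}

/-- The length of a path. -/
def Path.len (μ : G.Path) : ℕ := μ.edges.length

/-- The range (terminal vertex) of a path. -/
def Path.rng (μ : G.Path) : G.V := G.rangeFrom μ.src μ.edges

variable (G)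

/-- `G` has no sinks: every vertex emits at least one edge. -/
def NoSinks : Prop := ∀ v : G.V, ∃ e : G.E, G.s e = v

/-- `G` has no sources: every vertex receives at least one edge. -/
def NoSources : Prop := ∀ v : G.V, ∃ e : G.E, G.r e = v

/-- Every loop in `G` has an exit. -/
def EveryLoopHasExit : Prop :=
  ∀ μ : G.Path, μ.edges ≠ [] → μ.src = μ.rng →
    ∃ e ∈ μ.edges, ∃ f g : G.E, f ≠ g ∧ G.s f = G.s e ∧ G.s g = G.s e

variable (A : Type) [CStarAlgebra A] [PartialOrder A] [StarOrderedRing A]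

/-- A Cuntz–Krieger `G`-family in a unital C*-algebra `A`. -/
structure CKFamily where
  P : G.V → A
  S : G.E → A
  proj_idem : ∀ v, P v * P v = P v
  proj_sa : ∀ v, star (P v) = P v
  orth : ∀ v w, v ≠ w → P v * P w = 0
  ck1 : ∀ e, star (S e) * S e = P (G.r e)
  ck1' : ∀ e f, e ≠ f → star (S e) * S f = 0
  ck2 : ∀ e, S e * star (S e) ≤ P (G.s e)
  ck3 : ∀ v : G.V, (∃ e, G.s e = v) →
    P v = ∑ e ∈ Finset.univ.filter (fun e => G.s e = v), S e * star (S e)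

variable {G A}

/-- The partial isometry `S_μ` associated to a finite path, defined from the source. -/
def CKFamily.sFrom (F : CKFamily G A) : G.V → List G.E → A
  | v, [] => F.P v
  | _, e :: l => F.S e * F.sFrom (G.r e) l

/-- `S_μ` for a path `μ`. -/
def CKFamily.sPath (F : CKFamily G A) (μ : G.Path) : A := F.sFrom μ.src μ.edges

/-- `P_μ = S_μ S_μ*` for a path `μ`. -/
def CKFamily.pPath (F : CKFamily G A) (μ : G.Path) : A :=
  F.sPath μ * star (F.sPath μ)

variable (G A) in
/-- `A`, together with the Cuntz–Krieger family `F`, is the graph C*-algebra `C*(G)`: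
the family sums to one, generates `A` as a closed *-subalgebra, and is universal. -/
structure IsGraphCStarAlgebra (F : CKFamily G A) : Prop where
  sum_one : ∑ v : G.V, F.P v = 1
  generates :
    (StarAlgebra.adjoin ℂ (Set.range F.P ∪ Set.range F.S)).topologicalClosure = ⊤
  universal : ∀ (C : Type) [CStarAlgebra C] [PartialOrder C] [StarOrderedRing C]
    (F' : CKFamily G C), (∑ v : G.V, F'.P v) = 1 →
      ∃! φ : A →⋆ₐ[ℂ] C, (∀ v, φ (F.P v) = F'.P v) ∧ (∀ e, φ (F.S e) = F'.S e)

/-- The diagonal subalgebra `D_E`: the closed *-subalgebra generated by the `P_μ`. -/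
def CKFamily.DE (F : CKFamily G A) : StarSubalgebra ℂ A :=
  (StarAlgebra.adjoin ℂ {a : A | ∃ μ : G.Path, a = F.pPath μ}).topologicalClosure

/-- `D_E^k`: the linear span of the `P_μ`, `μ ∈ E^k`. -/
noncomputable def CKFamily.DEk (F : CKFamily G A) (k : ℕ) : Submodule ℂ A :=
  Submodule.span ℂ {a : A | ∃ μ : G.Path, μ.len = k ∧ a = F.pPath μ}

/-- The core AF-subalgebra `F_E`: closed linear span of words `S_μ S_ν*` with `|μ| = |ν|`. -/
def CKFamily.FE (F : CKFamily G A) : Set A :=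
  closure ((Submodule.span ℂ
    {a : A | ∃ μ ν : G.Path, μ.len = ν.len ∧ a = F.sPath μ * star (F.sPath ν)}
      : Submodule ℂ A) : Set A)

/-- `F_E^k`: the linear span of words `S_μ S_ν*` with `|μ| = |ν| = k`. -/
noncomputable def CKFamily.FEk (F : CKFamily G A) (k : ℕ) : Submodule ℂ A :=
  Submodule.span ℂ
    {a : A | ∃ μ ν : G.Path, μ.len = k ∧ ν.len = k ∧ a = F.sPath μ * star (F.sPath ν)}

/-- `u ∈ U_E` : `u` is a unitary commuting with all vertex projections. -/
def CKFamily.IsUE (F : CKFamily G A) (u : A) : Prop :=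
  u ∈ unitary A ∧ ∀ v, u * F.P v = F.P v * u

/-- `lam = λ_u` : the endomorphism determined by the unitary `u ∈ U_E`. -/
def CKFamily.IsLambdaU (F : CKFamily G A) (u : A) (lam : A →⋆ₐ[ℂ] A) : Prop :=
  (∀ e, lam (F.S e) = u * F.S e) ∧ (∀ v, lam (F.P v) = F.P v)

/-- The shift `φ(x) = Σ_e S_e x S_e*`. -/
def CKFamily.shift (F : CKFamily G A) (x : A) : A :=
  ∑ e : G.E, F.S e * x * star (F.S e)

/-- `u_k = u φ(u) ⋯ φ^{k-1}(u)` (with `u_0 = 1`). -/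
def CKFamily.ukProd (F : CKFamily G A) (u : A) : ℕ → A
  | 0 => 1
  | m + 1 => F.ukProd u m * F.shift^[m] u

/-- An element is a finite sum of words `S_α S_β*`. -/
def CKFamily.IsSumOfWords (F : CKFamily G A) (a : A) : Prop :=
  ∃ (n : ℕ) (μ ν : Fin n → G.Path),
    a = ∑ i, F.sPath (μ i) * star (F.sPath (ν i))

/-- The group `S_E` of unitaries of the form `Σ S_α S_β*`. -/
def CKFamily.SE (F : CKFamily G A) : Set A :=
  {a : A | a ∈ unitary A ∧ F.IsSumOfWords a}

/-- The group `P_E^k` of unitaries of the form `Σ S_α S_β*`, `|α| = |β| = k`. -/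
def CKFamily.PEk (F : CKFamily G A) (k : ℕ) : Set A :=
  {a : A | a ∈ unitary A ∧ ∃ (n : ℕ) (μ ν : Fin n → G.Path),
    (∀ i, (μ i).len = k ∧ (ν i).len = k) ∧
    a = ∑ i, F.sPath (μ i) * star (F.sPath (ν i))}

/-- `P_E = ∪_k P_E^k`. -/
def CKFamily.PE (F : CKFamily G A) : Set A := ⋃ k : ℕ, F.PEk k

/-- `γ_z` on generators: `γ (S e) = z • S e`, `γ (P v) = P v`. -/
def CKFamily.IsGaugeHom (F : CKFamily G A) (z : ℂ) (ρ : A →⋆ₐ[ℂ] A) : Prop :=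
  (∀ e, ρ (F.S e) = z • F.S e) ∧ (∀ v, ρ (F.P v) = F.P v)

/-- `γ_z` as an automorphism, on generators. -/
def CKFamily.IsGaugeAut (F : CKFamily G A) (z : ℂ) (γ : A ≃⋆ₐ[ℂ] A) : Prop :=
  (∀ e, γ (F.S e) = z • F.S e) ∧ (∀ v, γ (F.P v) = F.P v)

/-- The automorphism `α` of `C*(E)` is induced by an automorphism of the graph `E`. -/
def CKFamily.IsGraphInduced (F : CKFamily G A) (α : A ≃⋆ₐ[ℂ] A) : Prop :=
  ∃ (φV : G.V ≃ G.V) (φE : G.E ≃ G.E),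
    (∀ e, G.s (φE e) = φV (G.s e)) ∧ (∀ e, G.r (φE e) = φV (G.r e)) ∧
    (∀ e, α (F.S e) = F.S (φE e)) ∧ (∀ v, α (F.P v) = F.P (φV v))

/-- Membership in the subgroup `𝔊_E` of `Aut (C*(E))` generated by the graph
automorphisms `Γ_E` together with the automorphisms `λ_u`, `u ∈ S_E ∩ U_E`. -/
inductive CKFamily.InGG (F : CKFamily G A) : (A ≃⋆ₐ[ℂ] A) → Prop
  | gamma (α : A ≃⋆ₐ[ℂ] A) : F.IsGraphInduced α → F.InGG α
  | lam (α : A ≃⋆ₐ[ℂ] A) (u : A) : u ∈ F.SE → F.IsUE u →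
      (∀ e, α (F.S e) = u * F.S e) → (∀ v, α (F.P v) = F.P v) → F.InGG α
  | one : F.InGG (StarAlgEquiv.refl (R := ℂ) (A := A))
  | mul (α β : A ≃⋆ₐ[ℂ] A) : F.InGG α → F.InGG β → F.InGG (α.trans β)
  | inv (α : A ≃⋆ₐ[ℂ] A) : F.InGG α → F.InGG α.symm

/-- Membership in the subgroup `𝔊ℜ_E` of `Aut (C*(E))` generated by the graph
automorphisms `Γ_E` together with the automorphisms `λ_u`, `u ∈ P_E ∩ U_E`. -/
inductive CKFamily.InGGR (F : CKFamily G A) : (A ≃⋆ₐ[ℂ] A) → Prop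
  | gamma (α : A ≃⋆ₐ[ℂ] A) : F.IsGraphInduced α → F.InGGR α
  | lam (α : A ≃⋆ₐ[ℂ] A) (u : A) : u ∈ F.PE → F.IsUE u →
      (∀ e, α (F.S e) = u * F.S e) → (∀ v, α (F.P v) = F.P v) → F.InGGR α
  | one : F.InGGR (StarAlgEquiv.refl (R := ℂ) (A := A))
  | mul (α β : A ≃⋆ₐ[ℂ] A) : F.InGGR α → F.InGGR β → F.InGGR (α.trans β)
  | inv (α : A ≃⋆ₐ[ℂ] A) : F.InGGR α → F.InGGR α.symm


/-- The map `a^u_{e,f}(x) = S_e* u* x u S_f`. -/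
def CKFamily.amap (F : CKFamily G A) (u : A) (e f : G.E) (x : A) : A :=
  star (F.S e) * (star u * x * u) * F.S f

/-- Composition of the maps `a^u_{e,f}` along a list of pairs of edges. -/
def CKFamily.acomp (F : CKFamily G A) (u : A) : List (G.E × G.E) → A → A
  | [], x => x
  | p :: t, x => F.amap u p.1 p.2 (F.acomp u t x)

/-- The spaces `Ξ_r`: `Ξ_0 = F_E^{k-1}`, `Ξ_r = λ_u(H)* Ξ_{r-1} λ_u(H)`. -/
noncomputable def CKFamily.Xi (F : CKFamily G A) (u : A) (k : ℕ) : ℕ → Submodule ℂ A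
  | 0 => F.FEk (k - 1)
  | r + 1 => Submodule.span ℂ
      {a : A | ∃ x ∈ F.Xi u k r, ∃ e f : G.E, a = star (u * F.S e) * x * (u * F.S f)}

/-- The spaces `Ξ_r^D`: `Ξ_0^D = D_E^{k-1}`, `Ξ_r^D = λ_u(H)* Ξ_{r-1}^D λ_u(H)`. -/
noncomputable def CKFamily.XiD (F : CKFamily G A) (u : A) (k : ℕ) : ℕ → Submodule ℂ A
  | 0 => F.DEk (k - 1)
  | r + 1 => Submodule.span ℂ
      {a : A | ∃ x ∈ F.XiD u k r, ∃ e f : G.E, a = star (u * F.S e) * x * (u * F.S f)}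

end FinDirGraph



-- ========== Auxiliary lemmas ==========
namespace FinDirGraph

section Aux

variable {G : FinDirGraph} {A : Type} [CStarAlgebra A] [PartialOrder A] [StarOrderedRing A]
  {F : CKFamily G A}

open scoped CStarAlgebra

namespace CKFamily

@[simp] lemma sFrom_nil (v : G.V) : F.sFrom v [] = F.P v := rfl

@[simp] lemma sFrom_cons (v : G.V) (e : G.E) (l : List G.E) :
    F.sFrom v (e :: l) = F.S e * F.sFrom (G.r e) l := rfl

@[simp] lemma rangeFrom_nil (v : G.V) : G.rangeFrom v [] = v := rfl

@[simp] lemma rangeFrom_cons (v : G.V) (e : G.E) (l : List G.E) :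
    G.rangeFrom v (e :: l) = G.rangeFrom (G.r e) l := rfl

@[simp] lemma isPathFrom_nil (v : G.V) : G.IsPathFrom v [] := trivial

lemma isPathFrom_cons {v : G.V} {e : G.E} {l : List G.E} :
    G.IsPathFrom v (e :: l) ↔ G.s e = v ∧ G.IsPathFrom (G.r e) l := Iff.rfl

lemma p_mul_p (F : CKFamily G A) (v w : G.V) :
    F.P v * F.P w = if v = w then F.P w else 0 := by
  split
  · next h => subst h; exact F.proj_idem v
  · next h => exact F.orth v w h

lemma s_mul_p (F : CKFamily G A) (e : G.E) : F.S e * F.P (G.r e) = F.S e := by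
  have h := F.ck1 e
  have hid := F.proj_idem (G.r e)
  have hsa := F.proj_sa (G.r e)
  rw [← sub_eq_zero, ← CStarRing.star_mul_self_eq_zero_iff]
  rw [star_sub, star_mul, hsa]
  rw [sub_mul, mul_sub, mul_sub]
  rw [mul_assoc (F.P (G.r e)) (star (F.S e)) _, h]
  rw [mul_assoc (F.P (G.r e)) (star (F.S e)) _, ← mul_assoc (star (F.S e)) _ _, h]
  simp [hid]

lemma p_mul_s_self (F : CKFamily G A) (e : G.E) : F.P (G.s e) * F.S e = F.S e := by
  set p := F.P (G.s e) with hp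
  have hsa : star p = p := F.proj_sa _
  have hid : p * p = p := F.proj_idem _
  have h2 := F.ck2 e
  -- (1 - p) * S e = 0
  have key : (1 - p) * F.S e = 0 := by
    rw [← CStarRing.mul_star_self_eq_zero_iff]
    have hc : ((1 : A) - p) * (F.S e * star (F.S e)) * star (1 - p) ≤
        (1 - p) * F.P (G.s e) * star (1 - p) := by
      have hsa' : star ((1:A) - p) = 1 - p := by rw [star_sub, star_one, hsa]
      calc ((1:A) - p) * (F.S e * star (F.S e)) * star (1 - p)
          = star ((1:A) - p) * (F.S e * star (F.S e)) * (1 - p) := by rw [hsa']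
        _ ≤ star ((1:A) - p) * F.P (G.s e) * (1 - p) := star_left_conjugate_le_conjugate h2 _
        _ = (1 - p) * F.P (G.s e) * star ((1:A) - p) := by rw [hsa']
    have hz : ((1:A) - p) * F.P (G.s e) * star (1 - p) = 0 := by
      rw [star_sub, star_one, hsa, ← hp, sub_mul, one_mul, hid, sub_self, zero_mul]
    have hnn : 0 ≤ ((1:A) - p) * (F.S e * star (F.S e)) * star (1 - p) := by
      have : ((1:A) - p) * (F.S e * star (F.S e)) * star (1 - p)
          = ((1 - p) * F.S e) * star ((1 - p) * F.S e) := by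
        rw [star_mul]; noncomm_ring
      rw [this]
      exact mul_star_self_nonneg _
    have hle : ((1:A) - p) * (F.S e * star (F.S e)) * star (1 - p) ≤ 0 := hz ▸ hc
    have := le_antisymm hle hnn
    rw [← this, star_mul]; noncomm_ring
  have h0 : F.S e - p * F.S e = 0 := by
    have := key; rwa [sub_mul, one_mul] at this
  exact (sub_eq_zero.mp h0).symm

lemma p_mul_s_ne (F : CKFamily G A) {v : G.V} {e : G.E} (h : G.s e ≠ v) :
    F.P v * F.S e = 0 := by
  rw [← F.p_mul_s_self e, ← mul_assoc, F.orth v (G.s e) (Ne.symm h), zero_mul]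

lemma p_mul_s (F : CKFamily G A) (v : G.V) (e : G.E) :
    F.P v * F.S e = if G.s e = v then F.S e else 0 := by
  split
  · next h => rw [← h]; exact F.p_mul_s_self e
  · next h => exact F.p_mul_s_ne h

lemma star_s_mul_p (F : CKFamily G A) (v : G.V) (e : G.E) :
    star (F.S e) * F.P v = if G.s e = v then star (F.S e) else 0 := by
  have := congrArg star (F.p_mul_s v e)
  rw [star_mul, F.proj_sa] at this
  rw [this]
  split <;> simp

lemma star_s_mul_s (F : CKFamily G A) (e f : G.E) :
    star (F.S e) * F.S f = if e = f then F.P (G.r e) else 0 := by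
  split
  · next h => subst h; exact F.ck1 e
  · next h => exact F.ck1' e f h

lemma p_mul_sFrom (F : CKFamily G A) {w : G.V} {l : List G.E} (hl : G.IsPathFrom w l)
    (v : G.V) : F.P v * F.sFrom w l = if v = w then F.sFrom w l else 0 := by
  cases l with
  | nil => simpa using F.p_mul_p v w
  | cons e t =>
    obtain ⟨hs, _⟩ := hl
    rw [sFrom_cons, ← mul_assoc, F.p_mul_s v e, hs]
    split
    · next h => subst h; simp
    · next h =>
      rw [if_neg (by exact fun hh => h hh.symm), zero_mul]

lemma sFrom_mul_p (F : CKFamily G A) {v : G.V} {l : List G.E} (hl : G.IsPathFrom v l) :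
    F.sFrom v l * F.P (G.rangeFrom v l) = F.sFrom v l := by
  induction l generalizing v with
  | nil => simpa using F.proj_idem v
  | cons e t ih =>
    obtain ⟨hs, ht⟩ := hl
    rw [sFrom_cons, rangeFrom_cons, mul_assoc, ih ht]

lemma sFrom_mul_p_ne (F : CKFamily G A) {v : G.V} {l : List G.E} (hl : G.IsPathFrom v l)
    {w : G.V} (hw : w ≠ G.rangeFrom v l) : F.sFrom v l * F.P w = 0 := by
  rw [← F.sFrom_mul_p hl, mul_assoc, F.p_mul_p, if_neg (fun h => hw h.symm), mul_zero]

lemma star_sFrom_mul_self (F : CKFamily G A) {v : G.V} {l : List G.E}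
    (hl : G.IsPathFrom v l) :
    star (F.sFrom v l) * F.sFrom v l = F.P (G.rangeFrom v l) := by
  induction l generalizing v with
  | nil => simp [F.proj_sa, F.proj_idem]
  | cons e t ih =>
    obtain ⟨hs, ht⟩ := hl
    simp only [sFrom_cons, rangeFrom_cons, star_mul, mul_assoc]
    rw [← mul_assoc (star (F.S e)) (F.S e), F.ck1 e, F.p_mul_sFrom ht (G.r e), if_pos rfl,
      ih ht]

lemma isPathFrom_append {v : G.V} {l m : List G.E} :
    G.IsPathFrom v (l ++ m) ↔ G.IsPathFrom v l ∧ G.IsPathFrom (G.rangeFrom v l) m := by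
  induction l generalizing v with
  | nil => simp [IsPathFrom]
  | cons e t ih =>
    simp only [List.cons_append, isPathFrom_cons, rangeFrom_cons, ih, and_assoc]

lemma sFrom_append (F : CKFamily G A) {v : G.V} {l m : List G.E}
    (h : G.IsPathFrom v (l ++ m)) :
    F.sFrom v (l ++ m) = F.sFrom v l * F.sFrom (G.rangeFrom v l) m := by
  induction l generalizing v with
  | nil =>
    rw [isPathFrom_append] at h
    have hm2 : G.IsPathFrom v m := by simpa using h.2
    simp only [List.nil_append, sFrom_nil, rangeFrom_nil]
    rw [F.p_mul_sFrom hm2 v, if_pos rfl]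
  | cons e t ih =>
    rw [isPathFrom_append] at h
    obtain ⟨⟨hs, ht⟩, hm⟩ := h
    rw [List.cons_append, sFrom_cons, sFrom_cons, rangeFrom_cons,
      ih (isPathFrom_append.mpr ⟨ht, hm⟩), mul_assoc]

/-- Key mixed-product lemma. -/
lemma star_sFrom_mul_sFrom (F : CKFamily G A) {v w : G.V} {l m : List G.E}
    (hl : G.IsPathFrom v l) (hm : G.IsPathFrom w m) :
    (star (F.sFrom v l) * F.sFrom w m = 0) ∨
    (v = w ∧ ∃ t, m = l ++ t ∧
      star (F.sFrom v l) * F.sFrom w m = F.sFrom (G.rangeFrom v l) t) ∨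
    (v = w ∧ ∃ t, l = m ++ t ∧
      star (F.sFrom v l) * F.sFrom w m = star (F.sFrom (G.rangeFrom w m) t)) := by
  induction l generalizing v w m with
  | nil =>
    by_cases hvw : v = w
    · subst hvw
      refine Or.inr (Or.inl ⟨rfl, m, rfl, ?_⟩)
      simp only [sFrom_nil, rangeFrom_nil, F.proj_sa]
      rw [F.p_mul_sFrom hm v, if_pos rfl]
    · refine Or.inl ?_
      simp only [sFrom_nil, F.proj_sa]
      rw [F.p_mul_sFrom hm v, if_neg hvw]
  | cons e t ih =>
    obtain ⟨hs, ht⟩ := hl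
    cases m with
    | nil =>
      by_cases hvw : v = w
      · subst hvw
        refine Or.inr (Or.inr ⟨rfl, e :: t, rfl, ?_⟩)
        simp only [sFrom_nil, rangeFrom_nil]
        rw [← F.proj_sa v, ← star_mul, F.p_mul_sFrom (isPathFrom_cons.mpr ⟨hs, ht⟩) v,
          if_pos rfl]
      · refine Or.inl ?_
        rw [sFrom_nil, ← F.proj_sa w, ← star_mul,
          F.p_mul_sFrom (isPathFrom_cons.mpr ⟨hs, ht⟩) w,
          if_neg (fun h => hvw h.symm), star_zero]
    | cons f m' =>
      obtain ⟨hsf, hm'⟩ := hm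
      by_cases hef : e = f
      · subst hef
        have key : star (F.sFrom v (e :: t)) * F.sFrom w (e :: m')
            = star (F.sFrom (G.r e) t) * F.sFrom (G.r e) m' := by
          simp only [sFrom_cons, star_mul, mul_assoc]
          rw [← mul_assoc (star (F.S e)) (F.S e), F.ck1 e,
            F.p_mul_sFrom hm' (G.r e), if_pos rfl]
        rcases ih ht hm' with h0 | ⟨_, t', h1, h2⟩ | ⟨_, t', h1, h2⟩
        · exact Or.inl (key.trans h0)
        · refine Or.inr (Or.inl ⟨hs.symm.trans hsf, t', by simp [h1], ?_⟩)
          rw [key, h2]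
          rfl
        · refine Or.inr (Or.inr ⟨hs.symm.trans hsf, t', by simp [h1], ?_⟩)
          rw [key, h2]
          rfl
      · refine Or.inl ?_
        rw [sFrom_cons, sFrom_cons, star_mul, mul_assoc, ← mul_assoc (star (F.S e)),
          F.ck1' e f hef, zero_mul, mul_zero]

/-- Append a further path to a path. -/
def _root_.FinDirGraph.Path.app (μ : G.Path) (t : List G.E) (h : G.IsPathFrom μ.rng t) :
    G.Path :=
  ⟨μ.src, μ.edges ++ t, isPathFrom_append.mpr ⟨μ.ok, h⟩⟩

@[simp] lemma path_app_edges (μ : G.Path) (t : List G.E) (h : G.IsPathFrom μ.rng t) :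
    (μ.app t h).edges = μ.edges ++ t := rfl

lemma sPath_app (F : CKFamily G A) (μ : G.Path) (t : List G.E) (h : G.IsPathFrom μ.rng t) :
    F.sPath (μ.app t h) = F.sPath μ * F.sFrom μ.rng t :=
  F.sFrom_append (isPathFrom_append.mpr ⟨μ.ok, h⟩)

lemma word_of_ne_rng (F : CKFamily G A) {μ ν : G.Path} (h : μ.rng ≠ ν.rng) :
    F.sPath μ * star (F.sPath ν) = 0 := by
  have h' : G.rangeFrom μ.src μ.edges ≠ G.rangeFrom ν.src ν.edges := h
  unfold sPath
  rw [← F.sFrom_mul_p μ.ok, ← F.sFrom_mul_p ν.ok, star_mul, F.proj_sa, mul_assoc,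
    ← mul_assoc (F.P (G.rangeFrom μ.src μ.edges)), F.p_mul_p, if_neg h', zero_mul, mul_zero]

/-- The span of all words `S_μ S_ν*` (arbitrary lengths). -/
noncomputable def wordSpan (F : CKFamily G A) : Submodule ℂ A :=
  Submodule.span ℂ {a : A | ∃ μ ν : G.Path, a = F.sPath μ * star (F.sPath ν)}

lemma word_mem_wordSpan (F : CKFamily G A) (μ ν : G.Path) :
    F.sPath μ * star (F.sPath ν) ∈ F.wordSpan :=
  Submodule.subset_span ⟨μ, ν, rfl⟩

lemma p_mem_wordSpan (F : CKFamily G A) (v : G.V) : F.P v ∈ F.wordSpan := by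
  have : F.P v = F.sPath (⟨v, [], trivial⟩ : G.Path) *
      star (F.sPath (⟨v, [], trivial⟩ : G.Path)) := by
    simp [sPath, F.proj_sa, F.proj_idem]
  rw [this]; exact F.word_mem_wordSpan _ _
lemma s_mem_wordSpan (F : CKFamily G A) (e : G.E) : F.S e ∈ F.wordSpan := by
  have : F.S e = F.sPath (⟨G.s e, [e], ⟨rfl, trivial⟩⟩ : G.Path) *
      star (F.sPath (⟨G.r e, [], trivial⟩ : G.Path)) := by
    simp [sPath, F.proj_sa, F.s_mul_p]
  rw [this]; exact F.word_mem_wordSpan _ _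

lemma word_mul_word_mem (F : CKFamily G A) (μ ν α β : G.Path) :
    (F.sPath μ * star (F.sPath ν)) * (F.sPath α * star (F.sPath β)) ∈ F.wordSpan := by
  have hassoc : (F.sPath μ * star (F.sPath ν)) * (F.sPath α * star (F.sPath β))
      = F.sPath μ * (star (F.sPath ν) * F.sPath α) * star (F.sPath β) := by
    noncomm_ring
  rcases F.star_sFrom_mul_sFrom ν.ok α.ok with h0 | ⟨hvw, t, h1, h2⟩ | ⟨hvw, t, h1, h2⟩
  · have h0' : star (F.sPath ν) * F.sPath α = 0 := h0
    rw [hassoc, h0', mul_zero, zero_mul]; exact zero_mem _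
  · have h2' : star (F.sPath ν) * F.sPath α = F.sFrom ν.rng t := h2
    have hpt : G.IsPathFrom ν.rng t := by
      have hok := α.ok
      rw [h1, isPathFrom_append] at hok
      have := hok.2
      rwa [← hvw] at this
    by_cases hr : μ.rng = ν.rng
    · have hfin : (F.sPath μ * star (F.sPath ν)) * (F.sPath α * star (F.sPath β))
          = F.sPath (μ.app t (hr ▸ hpt)) * star (F.sPath β) := by
        rw [hassoc, h2', F.sPath_app, hr]
      rw [hfin]; exact F.word_mem_wordSpan _ _
    · have hmp : F.sPath μ * F.P μ.rng = F.sPath μ := F.sFrom_mul_p μ.ok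
      have habs : F.sPath μ * F.sFrom ν.rng t = 0 := by
        rw [← hmp, mul_assoc, F.p_mul_sFrom hpt μ.rng, if_neg hr, mul_zero]
      rw [hassoc, h2', habs, zero_mul]
      exact zero_mem _
  · have h2' : star (F.sPath ν) * F.sPath α = star (F.sFrom α.rng t) := h2
    have hpt : G.IsPathFrom α.rng t := by
      have hok := ν.ok
      rw [h1, isPathFrom_append] at hok
      have := hok.2
      rwa [hvw] at this
    by_cases hr : β.rng = α.rng
    · have hfin : (F.sPath μ * star (F.sPath ν)) * (F.sPath α * star (F.sPath β))
          = F.sPath μ * star (F.sPath (β.app t (hr ▸ hpt))) := by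
        rw [hassoc, h2', F.sPath_app, star_mul, ← mul_assoc, hr]
      rw [hfin]; exact F.word_mem_wordSpan _ _
    · have hmp : F.sPath β * F.P β.rng = F.sPath β := F.sFrom_mul_p β.ok
      have habs : F.sPath β * F.sFrom α.rng t = 0 := by
        rw [← hmp, mul_assoc, F.p_mul_sFrom hpt β.rng, if_neg hr, mul_zero]
      have hfin : (F.sPath μ * star (F.sPath ν)) * (F.sPath α * star (F.sPath β)) = 0 := by
        rw [hassoc, h2', mul_assoc, ← star_mul, habs, star_zero, mul_zero]
      rw [hfin]; exact zero_mem _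

lemma mul_mem_wordSpan (F : CKFamily G A) {a b : A}
    (ha : a ∈ F.wordSpan) (hb : b ∈ F.wordSpan) : a * b ∈ F.wordSpan := by
  induction hb using Submodule.span_induction with
  | mem x hx =>
    obtain ⟨α, β, rfl⟩ := hx
    induction ha using Submodule.span_induction with
    | mem y hy =>
      obtain ⟨μ, ν, rfl⟩ := hy
      exact F.word_mul_word_mem μ ν α β
    | zero => rw [zero_mul]; exact zero_mem _
    | add y z _ _ hy hz => rw [add_mul]; exact add_mem hy hz
    | smul c y _ hy => rw [smul_mul_assoc]; exact Submodule.smul_mem _ c hy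
  | zero => rw [mul_zero]; exact zero_mem _
  | add y z _ _ hy hz => rw [mul_add]; exact add_mem hy hz
  | smul c y _ hy => rw [mul_smul_comm]; exact Submodule.smul_mem _ c hy

lemma star_mem_wordSpan (F : CKFamily G A) {a : A} (ha : a ∈ F.wordSpan) :
    star a ∈ F.wordSpan := by
  induction ha using Submodule.span_induction with
  | mem x hx =>
    obtain ⟨μ, ν, rfl⟩ := hx
    rw [star_mul, star_star]
    exact F.word_mem_wordSpan ν μ
  | zero => rw [star_zero]; exact zero_mem _
  | add y z _ _ hy hz => rw [star_add]; exact add_mem hy hz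
  | smul c y _ hy => rw [star_smul]; exact Submodule.smul_mem _ _ hy

section Twist

variable (F)

/-- Twisted Cuntz–Krieger family `(P_v, w S_e)` for a unitary `w` commuting with the `P_v`. -/
def twistCK (w : A) (hw : w ∈ unitary A) (hwP : ∀ v, w * F.P v = F.P v * w) :
    CKFamily G A where
  P := F.P
  S := fun e => w * F.S e
  proj_idem := F.proj_idem
  proj_sa := F.proj_sa
  orth := F.orth
  ck1 := by
    intro e
    rw [star_mul, mul_assoc, ← mul_assoc (star w), (Unitary.mem_iff.mp hw).1, one_mul,
      F.ck1]
  ck1' := by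
    intro e f hef
    rw [star_mul, mul_assoc, ← mul_assoc (star w), (Unitary.mem_iff.mp hw).1, one_mul,
      F.ck1' e f hef]
  ck2 := by
    intro e
    have h1 : (w * F.S e) * star (w * F.S e) = w * (F.S e * star (F.S e)) * star w := by
      rw [star_mul]; noncomm_ring
    have h2 : w * (F.S e * star (F.S e)) * star w ≤ w * F.P (G.s e) * star w :=
      star_right_conjugate_le_conjugate (F.ck2 e) w
    have h3 : w * F.P (G.s e) * star w = F.P (G.s e) := by
      rw [hwP, mul_assoc, (Unitary.mem_iff.mp hw).2, mul_one]
    rw [h1]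
    exact h2.trans (le_of_eq h3)
  ck3 := by
    intro v hv
    have : ∀ e : G.E, (w * F.S e) * star (w * F.S e) = w * (F.S e * star (F.S e)) * star w := by
      intro e; rw [star_mul]; noncomm_ring
    simp only [this]
    rw [← Finset.sum_mul, ← Finset.mul_sum, ← F.ck3 v hv, hwP, mul_assoc,
      (Unitary.mem_iff.mp hw).2, mul_one]

variable {F} in
lemma twist_hom_unique (hGA : IsGraphCStarAlgebra G A F) {w : A} (hw : w ∈ unitary A)
    (hwP : ∀ v, w * F.P v = F.P v * w) (φ ψ : A →⋆ₐ[ℂ] A)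
    (hφP : ∀ v, φ (F.P v) = F.P v) (hφS : ∀ e, φ (F.S e) = w * F.S e)
    (hψP : ∀ v, ψ (F.P v) = F.P v) (hψS : ∀ e, ψ (F.S e) = w * F.S e) : φ = ψ := by
  obtain ⟨χ, hχ, hun⟩ := hGA.universal A (F.twistCK w hw hwP) hGA.sum_one
  have h1 : φ = χ := hun φ ⟨hφP, hφS⟩
  have h2 : ψ = χ := hun ψ ⟨hψP, hψS⟩
  rw [h1, h2]

variable {F} in
/-- Existence of the twisted endomorphism. -/
lemma twist_hom_exists (hGA : IsGraphCStarAlgebra G A F) {w : A} (hw : w ∈ unitary A)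
    (hwP : ∀ v, w * F.P v = F.P v * w) :
    ∃ φ : A →⋆ₐ[ℂ] A, (∀ v, φ (F.P v) = F.P v) ∧ (∀ e, φ (F.S e) = w * F.S e) := by
  obtain ⟨χ, hχ, _⟩ := hGA.universal A (F.twistCK w hw hwP) hGA.sum_one
  exact ⟨χ, hχ.1, hχ.2⟩

end Twist

omit [PartialOrder A] [StarOrderedRing A] in
lemma hom_continuous (φ : A →⋆ₐ[ℂ] A) : Continuous φ :=
  AddMonoidHomClass.continuous_of_bound φ 1
    (fun a => by simpa using NonUnitalStarAlgHom.norm_apply_le φ a)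

section Gauge

/-- `z(t) = exp(2πit)`. -/
noncomputable def zc (t : ℝ) : ℂ := Complex.exp (2 * Real.pi * t * Complex.I)

lemma zc_conj_mul (t : ℝ) : (starRingEnd ℂ) (zc t) * zc t = 1 := by
  rw [zc, ← Complex.exp_conj, ← Complex.exp_add]
  have : (starRingEnd ℂ) (2 * Real.pi * t * Complex.I) = -(2 * Real.pi * t * Complex.I) := by
    rw [map_mul, Complex.conj_I]
    have h2 : (starRingEnd ℂ) (2 * (Real.pi:ℂ) * (t:ℝ)) = 2 * Real.pi * t := by
      rw [show (2 * (Real.pi:ℂ) * (t:ℝ)) = ((2 * Real.pi * t : ℝ) : ℂ) by push_cast; ring,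
        Complex.conj_ofReal]
    rw [h2]
    ring
  rw [this, neg_add_cancel, Complex.exp_zero]

lemma zc_smul_one_unitary (t : ℝ) : (zc t • (1 : A)) ∈ unitary A := by
  rw [Unitary.mem_iff]
  constructor
  · rw [star_smul, star_one, smul_mul_smul_comm, one_mul, RCLike.star_def, zc_conj_mul]
    simp
  · rw [star_smul, star_one, smul_mul_smul_comm, one_mul, RCLike.star_def, mul_comm,
      zc_conj_mul]
    simp

lemma zc_continuous : Continuous zc := by
  unfold zc; fun_prop

@[simp] lemma zc_zero : zc 0 = 1 := by simp [zc]

lemma zc_norm_mul_self (t : ℝ) : zc t * zc (-t) = 1 := by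
  rw [zc, zc, ← Complex.exp_add]
  have : 2 * (Real.pi:ℂ) * t * Complex.I + 2 * Real.pi * (-t:ℝ) * Complex.I = 0 := by
    push_cast; ring
  rw [this, Complex.exp_zero]

lemma zc_pow (t : ℝ) (n : ℕ) : zc t ^ n = Complex.exp (2 * Real.pi * t * Complex.I * n) := by
  rw [zc, ← Complex.exp_nat_mul]
  ring_nf

end Gauge

lemma p_mul_star_s (F : CKFamily G A) (e : G.E) :
    F.P (G.r e) * star (F.S e) = star (F.S e) := by
  rw [← F.proj_sa, ← star_mul, F.s_mul_p]

section Shift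

lemma shift_commP (F : CKFamily G A) (x : A) (v : G.V) :
    F.shift x * F.P v = F.P v * F.shift x := by
  unfold shift
  rw [Finset.sum_mul, Finset.mul_sum]
  refine Finset.sum_congr rfl fun e _ => ?_
  simp only [mul_assoc]
  rw [F.star_s_mul_p v e, ← mul_assoc (F.P v) (F.S e), F.p_mul_s v e]
  split <;> simp [mul_assoc]

lemma shift_star (F : CKFamily G A) (x : A) : F.shift (star x) = star (F.shift x) := by
  unfold shift
  rw [star_sum]
  refine Finset.sum_congr rfl fun e _ => ?_
  simp only [star_mul, star_star, mul_assoc]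

lemma shift_mul (F : CKFamily G A) (x y : A) (hy : ∀ v, y * F.P v = F.P v * y) :
    F.shift (x * y) = F.shift x * F.shift y := by
  unfold shift
  rw [Finset.sum_mul]
  refine Finset.sum_congr rfl fun e _ => ?_
  rw [Finset.mul_sum, Finset.sum_eq_single e]
  · simp only [mul_assoc]
    rw [← mul_assoc (star (F.S e)) (F.S e), F.ck1 e, ← mul_assoc (F.P (G.r e)) y,
      ← hy (G.r e), mul_assoc y, F.p_mul_star_s e]
  · intro f _ hfe
    simp only [mul_assoc]
    rw [← mul_assoc (star (F.S e)) (F.S f), F.ck1' e f (fun h => hfe h.symm)]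
    simp
  · intro h; exact absurd (Finset.mem_univ e) h

lemma shift_S (F : CKFamily G A) (x : A) (hx : ∀ v, x * F.P v = F.P v * x) (e : G.E) :
    F.shift x * F.S e = F.S e * x := by
  unfold shift
  rw [Finset.sum_mul, Finset.sum_eq_single e]
  · simp only [mul_assoc]
    rw [F.ck1 e, hx (G.r e), ← mul_assoc, F.s_mul_p]
  · intro f _ hfe
    simp only [mul_assoc]
    rw [F.ck1' f e hfe]
    simp
  · intro h; exact absurd (Finset.mem_univ e) h

end Shift

section WProd

/-- `w_k = u φ(u) ⋯ φ^{k-1}(u)` defined by `w_0 = 1`, `w_{k+1} = u φ(w_k)`. -/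
noncomputable def wProd (F : CKFamily G A) (u : A) : ℕ → A
  | 0 => 1
  | k + 1 => u * F.shift (F.wProd u k)

/-- `q_k = w_k* w_k`. -/
noncomputable def qProj (F : CKFamily G A) (u : A) (k : ℕ) : A :=
  star (F.wProd u k) * F.wProd u k

variable {u : A}

lemma wProd_commP (hu : F.IsUE u) (k : ℕ) (v : G.V) :
    F.wProd u k * F.P v = F.P v * F.wProd u k := by
  induction k with
  | zero => simp [wProd]
  | succ k ih =>
    rw [wProd, mul_assoc, F.shift_commP, ← mul_assoc, hu.2 v, mul_assoc]

lemma star_comm_of_commP {x : A} (hx : ∀ v, x * F.P v = F.P v * x) (v : G.V) :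
    star x * F.P v = F.P v * star x := by
  have h1 : star x * F.P v = star (F.P v * x) := by rw [star_mul, F.proj_sa]
  have h2 : F.P v * star x = star (x * F.P v) := by rw [star_mul, F.proj_sa]
  rw [h1, h2, hx]

lemma wProd_S (hu : F.IsUE u) (k : ℕ) (e : G.E) :
    F.wProd u (k + 1) * F.S e = u * F.S e * F.wProd u k := by
  rw [wProd, mul_assoc, F.shift_S _ (wProd_commP hu k), mul_assoc]

lemma lam_sFrom (hu : F.IsUE u) {lam : A →⋆ₐ[ℂ] A} (hlam : F.IsLambdaU u lam)
    {v : G.V} (l : List G.E) :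
    lam (F.sFrom v l) = F.wProd u l.length * F.sFrom v l := by
  induction l generalizing v with
  | nil => simp [hlam.2 v, wProd]
  | cons e t ih =>
    rw [sFrom_cons, map_mul, hlam.1 e, ih, List.length_cons, ← mul_assoc,
      ← wProd_S hu, mul_assoc]

lemma qProj_succ (hu : F.IsUE u) (k : ℕ) :
    F.qProj u (k + 1) = F.shift (F.qProj u k) := by
  unfold qProj
  rw [show F.wProd u (k+1) = u * F.shift (F.wProd u k) from rfl, star_mul, mul_assoc,
    ← mul_assoc (star u), hu.1.1, one_mul, ← F.shift_star,
    ← F.shift_mul _ _ (wProd_commP hu k)]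

lemma qProj_commP (hu : F.IsUE u) (k : ℕ) (v : G.V) :
    F.qProj u k * F.P v = F.P v * F.qProj u k := by
  unfold qProj
  rw [mul_assoc, wProd_commP hu k, ← mul_assoc, star_comm_of_commP (wProd_commP hu k),
    mul_assoc]

lemma qProj_star (k : ℕ) : star (F.qProj u k) = F.qProj u k := by
  unfold qProj; rw [star_mul, star_star]

lemma qProj_idem (hu : F.IsUE u) (k : ℕ) : F.qProj u k * F.qProj u k = F.qProj u k := by
  induction k with
  | zero => unfold qProj wProd; simp
  | succ k ih =>
    rw [qProj_succ hu, ← F.shift_mul _ _ (qProj_commP hu k), ih]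

lemma qProj_mul_sFrom (hu : F.IsUE u) {k : ℕ} {v : G.V} {l : List G.E}
    (hl : G.IsPathFrom v l) (hk : k ≤ l.length) :
    F.qProj u k * F.sFrom v l = F.sFrom v l := by
  induction k generalizing v l with
  | zero => unfold qProj wProd; simp
  | succ k ih =>
    cases l with
    | nil => simp at hk
    | cons e t =>
      obtain ⟨hs, ht⟩ := hl
      rw [qProj_succ hu, sFrom_cons, ← mul_assoc,
        F.shift_S _ (qProj_commP hu k) e, mul_assoc, ih ht (Nat.succ_le_succ_iff.mp hk)]

lemma wProd_norm_le (hu : F.IsUE u) (k : ℕ) : ‖F.wProd u k‖ ≤ 1 := by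
  have h1 : ‖F.qProj u k‖ * ‖F.qProj u k‖ = ‖F.qProj u k‖ := by
    conv_lhs => rw [← CStarRing.norm_star_mul_self, qProj_star, qProj_idem hu]
  have hq : ‖F.qProj u k‖ ≤ 1 := by nlinarith [norm_nonneg (F.qProj u k)]
  have h2 : ‖F.wProd u k‖ * ‖F.wProd u k‖ = ‖F.qProj u k‖ := by
    rw [← CStarRing.norm_star_mul_self]; rfl
  nlinarith [norm_nonneg (F.wProd u k)]

end WProd

section Levels

variable {u : A}

lemma lam_on_FEk (hu : F.IsUE u) {lam : A →⋆ₐ[ℂ] A} (hlam : F.IsLambdaU u lam)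
    {k : ℕ} {x : A} (hx : x ∈ F.FEk k) :
    lam x = F.wProd u k * x * star (F.wProd u k) := by
  induction hx using Submodule.span_induction with
  | mem a ha =>
    obtain ⟨μ, ν, hμ, hν, rfl⟩ := ha
    have e1 : lam (F.sPath μ) = F.wProd u μ.len * F.sPath μ := lam_sFrom hu hlam μ.edges
    have e2 : lam (F.sPath ν) = F.wProd u ν.len * F.sPath ν := lam_sFrom hu hlam ν.edges
    rw [map_mul, map_star, e1, e2, hμ, hν, star_mul]
    simp only [mul_assoc]
  | zero => simp
  | add a b _ _ ha hb => rw [map_add, ha, hb]; noncomm_ring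
  | smul c a _ ha => rw [map_smul, ha]; simp [smul_mul_assoc, mul_smul_comm]

lemma qProj_fix_FEk (hu : F.IsUE u) {k : ℕ} {x : A} (hx : x ∈ F.FEk k) :
    F.qProj u k * x = x ∧ x * F.qProj u k = x := by
  induction hx using Submodule.span_induction with
  | mem a ha =>
    obtain ⟨μ, ν, hμ, hν, rfl⟩ := ha
    have h1 : F.qProj u k * F.sPath μ = F.sPath μ := by
      have := qProj_mul_sFrom hu μ.ok (le_of_eq hμ.symm)
      exact this
    have h2 : F.qProj u k * F.sPath ν = F.sPath ν := by
      have := qProj_mul_sFrom hu ν.ok (le_of_eq hν.symm)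
      exact this
    constructor
    · rw [← mul_assoc, h1]
    · rw [mul_assoc, ← qProj_star (F := F) (u := u) k, ← star_mul, h2]
  | zero => simp
  | add a b _ _ ha hb =>
    exact ⟨by rw [mul_add, ha.1, hb.1], by rw [add_mul, ha.2, hb.2]⟩
  | smul c a _ ha =>
    exact ⟨by rw [mul_smul_comm, ha.1], by rw [smul_mul_assoc, ha.2]⟩

lemma norm_lam_FEk (hu : F.IsUE u) {lam : A →⋆ₐ[ℂ] A} (hlam : F.IsLambdaU u lam)
    {k : ℕ} {x : A} (hx : x ∈ F.FEk k) : ‖lam x‖ = ‖x‖ := by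
  have hle : ‖lam x‖ ≤ ‖x‖ := by
    rw [lam_on_FEk hu hlam hx]
    calc ‖F.wProd u k * x * star (F.wProd u k)‖
        ≤ ‖F.wProd u k * x‖ * ‖star (F.wProd u k)‖ := norm_mul_le _ _
      _ ≤ ‖F.wProd u k‖ * ‖x‖ * ‖star (F.wProd u k)‖ := by
          gcongr; exact norm_mul_le _ _
      _ ≤ 1 * ‖x‖ * 1 := by
          rw [norm_star]
          gcongr <;> [exact wProd_norm_le hu k; exact wProd_norm_le hu k]
      _ = ‖x‖ := by ring
  have hge : ‖x‖ ≤ ‖lam x‖ := by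
    have hrec : star (F.wProd u k) * lam x * F.wProd u k = x := by
      rw [lam_on_FEk hu hlam hx]
      have h1 : star (F.wProd u k) * (F.wProd u k * x * star (F.wProd u k)) * F.wProd u k
          = F.qProj u k * x * F.qProj u k := by
        unfold qProj; noncomm_ring
      rw [h1, mul_assoc, (qProj_fix_FEk hu hx).2, (qProj_fix_FEk hu hx).1]
    calc ‖x‖ = ‖star (F.wProd u k) * lam x * F.wProd u k‖ := by rw [hrec]
      _ ≤ ‖star (F.wProd u k) * lam x‖ * ‖F.wProd u k‖ := norm_mul_le _ _
      _ ≤ ‖star (F.wProd u k)‖ * ‖lam x‖ * ‖F.wProd u k‖ := by gcongr; exact norm_mul_le _ _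
      _ ≤ 1 * ‖lam x‖ * 1 := by
          rw [norm_star]
          gcongr <;> [exact wProd_norm_le hu k; exact wProd_norm_le hu k]
      _ = ‖lam x‖ := by ring
  exact le_antisymm hle hge

end Levels

section Blocks

lemma sink_orth (F : CKFamily G A) {μ ν : G.Path} (hsink : ∀ e : G.E, G.s e ≠ μ.rng)
    (hlen : μ.len < ν.len) : star (F.sPath μ) * F.sPath ν = 0 := by
  rcases F.star_sFrom_mul_sFrom μ.ok ν.ok with h0 | ⟨hvw, t, h1, h2⟩ | ⟨hvw, t, h1, h2⟩
  · exact h0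
  · exfalso
    cases t with
    | nil =>
      have : ν.len = μ.len := by
        unfold Path.len; rw [h1]; simp
      omega
    | cons e t' =>
      have hok := ν.ok
      rw [show ν.src = μ.src from hvw.symm] at hok
      rw [h1, isPathFrom_append] at hok
      exact hsink e hok.2.1
  · exfalso
    have : ν.len ≤ μ.len := by
      unfold Path.len at *
      rw [h1]
      simp
    omega

/-- Words in the `j`-th block at level `K`. -/
def blockSet (F : CKFamily G A) (K j : ℕ) : Set A :=
  {a : A | ∃ μ ν : G.Path, μ.len = j ∧ ν.len = j ∧ μ.rng = ν.rng ∧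
    (j = K ∨ ∀ e : G.E, G.s e ≠ μ.rng) ∧ a = F.sPath μ * star (F.sPath ν)}

noncomputable def blockSpan (F : CKFamily G A) (K j : ℕ) : Submodule ℂ A :=
  Submodule.span ℂ (F.blockSet K j)

lemma blockSpan_le_FEk (F : CKFamily G A) (K j : ℕ) : F.blockSpan K j ≤ F.FEk j := by
  refine Submodule.span_le.mpr ?_
  rintro a ⟨μ, ν, hμ, hν, _, _, rfl⟩
  exact Submodule.subset_span ⟨μ, ν, hμ, hν, rfl⟩

lemma block_word_orth (F : CKFamily G A) {K i j : ℕ} (hij : i < j) (hjK : j ≤ K)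
    {a b : A} (ha : a ∈ F.blockSet K i) (hb : b ∈ F.blockSet K j) :
    star a * b = 0 ∧ a * star b = 0 := by
  obtain ⟨μ, ν, hμ, hν, hrng, hcond, rfl⟩ := ha
  obtain ⟨α, β, hα, hβ, _, _, rfl⟩ := hb
  have hsink : ∀ e : G.E, G.s e ≠ μ.rng := by
    rcases hcond with h | h
    · omega
    · exact h
  have hsinkν : ∀ e : G.E, G.s e ≠ ν.rng := hrng ▸ hsink
  constructor
  · have hz : star (F.sPath μ) * F.sPath α = 0 := F.sink_orth hsink (by omega)
    rw [star_mul, star_star]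
    calc F.sPath ν * star (F.sPath μ) * (F.sPath α * star (F.sPath β))
        = F.sPath ν * (star (F.sPath μ) * F.sPath α) * star (F.sPath β) := by noncomm_ring
      _ = 0 := by rw [hz, mul_zero, zero_mul]
  · have hz : star (F.sPath ν) * F.sPath β = 0 := F.sink_orth hsinkν (by omega)
    rw [star_mul, star_star]
    calc F.sPath μ * star (F.sPath ν) * (F.sPath β * star (F.sPath α))
        = F.sPath μ * (star (F.sPath ν) * F.sPath β) * star (F.sPath α) := by noncomm_ring
      _ = 0 := by rw [hz, mul_zero, zero_mul]

lemma blockSpan_orth (F : CKFamily G A) {K i j : ℕ} (hij : i ≠ j) (hiK : i ≤ K) (hjK : j ≤ K)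
    {x y : A} (hx : x ∈ F.blockSpan K i) (hy : y ∈ F.blockSpan K j) :
    star x * y = 0 ∧ x * star y = 0 := by
  have word : ∀ {a b : A}, a ∈ F.blockSet K i → b ∈ F.blockSet K j →
      star a * b = 0 ∧ a * star b = 0 := by
    intro a b ha hb
    rcases Nat.lt_or_ge i j with h | h
    · exact F.block_word_orth h hjK ha hb
    · have h' : j < i := by omega
      obtain ⟨h1, h2⟩ := F.block_word_orth h' hiK hb ha
      constructor
      · have he : star a * b = star (star b * a) := by rw [star_mul, star_star]
        rw [he, h1, star_zero]
      · have he : a * star b = star (b * star a) := by rw [star_mul, star_star]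
        rw [he, h2, star_zero]
  -- bilinear extension
  induction hy using Submodule.span_induction with
  | mem b hb =>
    induction hx using Submodule.span_induction with
    | mem a ha => exact word ha hb
    | zero => simp
    | add a c _ _ hac hcc =>
      exact ⟨by rw [star_add, add_mul, hac.1, hcc.1, add_zero],
        by rw [add_mul, hac.2, hcc.2, add_zero]⟩
    | smul c a _ hac =>
      exact ⟨by rw [star_smul, smul_mul_assoc, hac.1, smul_zero],
        by rw [smul_mul_assoc, hac.2, smul_zero]⟩
  | zero => simp
  | add b c _ _ hbc hcc =>
    exact ⟨by rw [mul_add, hbc.1, hcc.1, add_zero],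
      by rw [star_add, mul_add, hbc.2, hcc.2, add_zero]⟩
  | smul c b _ hbc =>
    exact ⟨by rw [mul_smul_comm, hbc.1, smul_zero],
      by rw [star_smul, mul_smul_comm, hbc.2, smul_zero]⟩

/-- Elements decomposable as sums of block elements at level `K`. -/
def blockDec (F : CKFamily G A) (K : ℕ) : Submodule ℂ A where
  carrier := {x : A | ∃ y : ℕ → A, (∀ j, y j ∈ F.blockSpan K j) ∧
    x = ∑ j ∈ Finset.range (K+1), y j}
  zero_mem' := ⟨fun _ => 0, fun j => zero_mem _, by simp⟩
  add_mem' := by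
    rintro a b ⟨ya, hya, rfl⟩ ⟨yb, hyb, rfl⟩
    exact ⟨fun j => ya j + yb j, fun j => add_mem (hya j) (hyb j), by
      rw [Finset.sum_add_distrib]⟩
  smul_mem' := by
    rintro c a ⟨ya, hya, rfl⟩
    exact ⟨fun j => c • ya j, fun j => Submodule.smul_mem _ _ (hya j), by
      rw [Finset.smul_sum]⟩

lemma word_mem_blockDec (F : CKFamily G A) (K : ℕ) :
    ∀ n j (μ ν : G.Path), μ.len = j → ν.len = j → j + n = K →
      F.sPath μ * star (F.sPath ν) ∈ F.blockDec K := by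
  intro n
  induction n with
  | zero =>
    intro j μ ν hμ hν hjK
    by_cases hrng : μ.rng = ν.rng
    · refine ⟨fun i => if i = K then F.sPath μ * star (F.sPath ν) else 0, fun i => ?_, ?_⟩
      · by_cases hi : i = K
        · simp only [hi, if_pos rfl]
          exact Submodule.subset_span ⟨μ, ν, by omega, by omega, hrng, Or.inl (by omega), rfl⟩
        · simp only [if_neg hi]
          exact zero_mem _
      · rw [Finset.sum_ite_eq' (Finset.range (K+1)) K]
        simp
    · rw [F.word_of_ne_rng hrng]; exact zero_mem _
  | succ n ih =>
    intro j μ ν hμ hν hjK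
    by_cases hrng : μ.rng = ν.rng
    · by_cases hsink : ∀ e : G.E, G.s e ≠ μ.rng
      · refine ⟨fun i => if i = j then F.sPath μ * star (F.sPath ν) else 0, fun i => ?_, ?_⟩
        · by_cases hi : i = j
          · simp only [hi, if_pos rfl]
            exact Submodule.subset_span ⟨μ, ν, by omega, by omega, hrng, Or.inr hsink, rfl⟩
          · simp only [if_neg hi]
            exact zero_mem _
        · rw [Finset.sum_ite_eq' (Finset.range (K+1)) j]
          rw [if_pos (by simp; omega)]
      · push_neg at hsink
        have hemits : ∃ e : G.E, G.s e = μ.rng := hsink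
        have hexp : F.sPath μ * star (F.sPath ν)
            = ∑ e ∈ Finset.univ.filter (fun e => G.s e = μ.rng),
                (F.sPath μ * F.S e) * star (F.sPath ν * F.S e) := by
          have h1 : F.sPath μ * F.P μ.rng = F.sPath μ := F.sFrom_mul_p μ.ok
          calc F.sPath μ * star (F.sPath ν)
              = (F.sPath μ * F.P μ.rng) * star (F.sPath ν) := by rw [h1]
            _ = ∑ e ∈ Finset.univ.filter (fun e => G.s e = μ.rng),
                  F.sPath μ * (F.S e * star (F.S e)) * star (F.sPath ν) := by
                rw [F.ck3 μ.rng hemits, Finset.mul_sum, Finset.sum_mul]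
            _ = ∑ e ∈ Finset.univ.filter (fun e => G.s e = μ.rng),
                  (F.sPath μ * F.S e) * star (F.sPath ν * F.S e) := by
                refine Finset.sum_congr rfl fun e he => ?_
                rw [star_mul]
                noncomm_ring
        rw [hexp]
        refine Submodule.sum_mem _ fun e he => ?_
        have hse : G.s e = μ.rng := by simpa using he
        have hμe : G.IsPathFrom μ.rng [e] := ⟨hse, trivial⟩
        have hνe : G.IsPathFrom ν.rng [e] := ⟨hrng ▸ hse, trivial⟩
        have hs1 : F.sPath μ * F.S e = F.sPath (μ.app [e] hμe) := by
          rw [F.sPath_app]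
          show _ = F.sPath μ * (F.S e * F.sFrom (G.r e) [])
          rw [sFrom_nil, F.s_mul_p]
        have hs2 : F.sPath ν * F.S e = F.sPath (ν.app [e] hνe) := by
          rw [F.sPath_app]
          show _ = F.sPath ν * (F.S e * F.sFrom (G.r e) [])
          rw [sFrom_nil, F.s_mul_p]
        rw [hs1, hs2]
        refine ih (j+1) (μ.app [e] hμe) (ν.app [e] hνe) ?_ ?_ (by omega)
        · have hμ' : μ.edges.length = j := hμ
          show (μ.edges ++ [e]).length = j + 1
          simp [hμ']
        · have hν' : ν.edges.length = j := hν
          show (ν.edges ++ [e]).length = j + 1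
          simp [hν']
    · rw [F.word_of_ne_rng hrng]; exact zero_mem _

lemma blockDec_mono (F : CKFamily G A) {K K' : ℕ} (h : K ≤ K') :
    F.blockDec K ≤ F.blockDec K' := by
  rintro x ⟨y, hy, rfl⟩
  refine Submodule.sum_mem _ fun j hj => ?_
  have hjK : j ≤ K := by simpa using Nat.lt_succ_iff.mp (Finset.mem_range.mp hj)
  have : F.blockSpan K j ≤ F.blockDec K' := by
    refine Submodule.span_le.mpr ?_
    rintro a ⟨μ, ν, hμ, hν, hrng, hcond, rfl⟩
    exact F.word_mem_blockDec K' (K' - j) j μ ν hμ hν (by omega)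
  exact this (hy j)

end Blocks

section NormOrth

variable {ι : Type*} [DecidableEq ι]

lemma pow_sum_orth (s : Finset ι) (a : ι → A)
    (horth : ∀ i ∈ s, ∀ j ∈ s, i ≠ j → a i * a j = 0) :
    ∀ n, 1 ≤ n → (∑ i ∈ s, a i) ^ n = ∑ i ∈ s, (a i) ^ n := by
  intro n hn
  induction n with
  | zero => omega
  | succ n ih =>
    rcases Nat.eq_or_lt_of_le hn with h | h
    · simp [← h]
    · have hn1 : 1 ≤ n := by omega
      rw [pow_succ, ih hn1, Finset.sum_mul]
      refine Finset.sum_congr rfl fun i hi => ?_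
      rw [Finset.mul_sum, Finset.sum_eq_single i]
      · rw [← pow_succ]
      · intro j hj hji
        have : a i ^ n = a i ^ (n-1) * a i := by
          conv_lhs => rw [show n = (n-1) + 1 by omega]
          rw [pow_succ]
        rw [this, mul_assoc, horth i hi j hj (fun h => hji h.symm), mul_zero]
      · intro h; exact absurd hi h

lemma sa_norm_pow {x : A} (hx : IsSelfAdjoint x) (m : ℕ) :
    ‖x ^ (2 ^ m)‖ = ‖x‖ ^ (2 ^ m) := by
  induction m with
  | zero => simp
  | succ m ih =>
    have h1 : x ^ (2 ^ (m+1)) = (x ^ (2 ^ m)) * (x ^ (2 ^ m)) := by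
      rw [← pow_add]
      congr 1
      omega
    have hsa : IsSelfAdjoint (x ^ (2 ^ m)) := hx.pow _
    have h2 := CStarRing.norm_star_mul_self (x := x ^ (2^m))
    rw [hsa.star_eq] at h2
    rw [h1, h2, ih, ← pow_add]
    congr 1
    omega

lemma le_norm_sum_orth (s : Finset ι) (a : ι → A) (hpos : ∀ i ∈ s, 0 ≤ a i)
    {i : ι} (hi : i ∈ s) : ‖a i‖ ≤ ‖∑ j ∈ s, a j‖ := by
  refine CStarAlgebra.norm_le_norm_of_nonneg_of_le (hpos i hi) ?_
  have h : ∑ j ∈ s, a j - a i = ∑ j ∈ s.erase i, a j := by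
    rw [← Finset.add_sum_erase s a hi]
    abel
  have h2 : 0 ≤ ∑ j ∈ s.erase i, a j :=
    Finset.sum_nonneg fun j hj => hpos j (Finset.mem_of_mem_erase hj)
  have h3 : 0 ≤ ∑ j ∈ s, a j - a i := h ▸ h2
  exact sub_nonneg.mp h3

lemma norm_sum_orth_le (s : Finset ι) (a : ι → A) (hpos : ∀ i ∈ s, 0 ≤ a i)
    (horth : ∀ i ∈ s, ∀ j ∈ s, i ≠ j → a i * a j = 0)
    {M : ℝ} (hM0 : 0 ≤ M) (hM : ∀ i ∈ s, ‖a i‖ ≤ M) : ‖∑ i ∈ s, a i‖ ≤ M := by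
  have hsa : ∀ i ∈ s, IsSelfAdjoint (a i) := fun i hi => .of_nonneg (hpos i hi)
  have hsum_sa : IsSelfAdjoint (∑ i ∈ s, a i) := by
    unfold IsSelfAdjoint
    rw [star_sum]
    exact Finset.sum_congr rfl fun i hi => hsa i hi
  have key : ∀ m : ℕ, ‖∑ i ∈ s, a i‖ ^ (2^m) ≤ (s.card : ℝ) * M ^ (2^m) := by
    intro m
    have h1 : ‖∑ i ∈ s, a i‖ ^ (2^m) = ‖(∑ i ∈ s, a i) ^ (2^m)‖ :=
      (sa_norm_pow hsum_sa m).symm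
    have h2 : (∑ i ∈ s, a i) ^ (2^m) = ∑ i ∈ s, (a i) ^ (2^m) :=
      pow_sum_orth s a horth _ (Nat.one_le_two_pow)
    calc ‖∑ i ∈ s, a i‖ ^ (2^m) = ‖∑ i ∈ s, (a i) ^ (2^m)‖ := by rw [h1, h2]
      _ ≤ ∑ i ∈ s, ‖(a i) ^ (2^m)‖ := norm_sum_le _ _
      _ = ∑ i ∈ s, ‖a i‖ ^ (2^m) := Finset.sum_congr rfl fun i hi => sa_norm_pow (hsa i hi) m
      _ ≤ ∑ i ∈ s, M ^ (2^m) := Finset.sum_le_sum fun i hi =>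
          pow_le_pow_left₀ (norm_nonneg _) (hM i hi) _
      _ = (s.card : ℝ) * M ^ (2^m) := by rw [Finset.sum_const, nsmul_eq_mul]
  by_contra hlt
  push_neg at hlt
  set c := ‖∑ i ∈ s, a i‖ with hc
  rcases eq_or_lt_of_le hM0 with hM0' | hM0'
  · have := key 0
    simp only [pow_zero, pow_one] at this
    rw [← hM0'] at this
    simp at this
    nlinarith [norm_nonneg (∑ i ∈ s, a i)]
  · have hr : 1 < c / M := (one_lt_div hM0').mpr hlt
    obtain ⟨n, hn⟩ := pow_unbounded_of_one_lt (s.card : ℝ) hr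
    have h1 : (c / M) ^ n ≤ (c / M) ^ (2^n) :=
      pow_le_pow_right₀ hr.le (Nat.le_of_lt (Nat.lt_two_pow_self (n := n)))
    have h2 : (c / M) ^ (2^n) ≤ (s.card : ℝ) := by
      rw [div_pow, div_le_iff₀ (by positivity)]
      exact key n
    linarith
    
lemma norm_sum_orth_eq (s : Finset ι) (a b : ι → A) (hposa : ∀ i ∈ s, 0 ≤ a i)
    (hposb : ∀ i ∈ s, 0 ≤ b i)
    (hortha : ∀ i ∈ s, ∀ j ∈ s, i ≠ j → a i * a j = 0)
    (horthb : ∀ i ∈ s, ∀ j ∈ s, i ≠ j → b i * b j = 0)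
    (hnorm : ∀ i ∈ s, ‖a i‖ = ‖b i‖) :
    ‖∑ i ∈ s, a i‖ = ‖∑ i ∈ s, b i‖ := by
  refine le_antisymm ?_ ?_
  · refine norm_sum_orth_le s a hposa hortha (norm_nonneg _) fun i hi => ?_
    rw [hnorm i hi]
    exact le_norm_sum_orth s b hposb hi
  · refine norm_sum_orth_le s b hposb horthb (norm_nonneg _) fun i hi => ?_
    rw [← hnorm i hi]
    exact le_norm_sum_orth s a hposa hi

lemma norm_sum_sq (s : Finset ι) (y : ι → A)
    (horth : ∀ i ∈ s, ∀ j ∈ s, i ≠ j → y i * star (y j) = 0) :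
    ‖∑ i ∈ s, y i‖ * ‖∑ i ∈ s, y i‖ = ‖∑ i ∈ s, y i * star (y i)‖ := by
  have h1 : (∑ i ∈ s, y i) * star (∑ i ∈ s, y i) = ∑ i ∈ s, y i * star (y i) := by
    rw [star_sum, Finset.sum_mul_sum]
    refine Finset.sum_congr rfl fun i hi => ?_
    rw [Finset.sum_eq_single i]
    · intro j hj hji
      exact horth i hi j hj (fun h => hji h.symm)
    · intro h; exact absurd hi h
  rw [← CStarRing.norm_self_mul_star, h1]

end NormOrth

section FEIso

variable {u : A}

/-- The dense submodule of `F_E`. -/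
noncomputable def feSpan (F : CKFamily G A) : Submodule ℂ A :=
  Submodule.span ℂ
    {a : A | ∃ μ ν : G.Path, μ.len = ν.len ∧ a = F.sPath μ * star (F.sPath ν)}

lemma fe_eq_closure_feSpan (F : CKFamily G A) : F.FE = closure (F.feSpan : Set A) := rfl

lemma feSpan_mem_blockDec (F : CKFamily G A) {x : A} (hx : x ∈ F.feSpan) :
    ∃ K, x ∈ F.blockDec K := by
  induction hx using Submodule.span_induction with
  | mem a ha =>
    obtain ⟨μ, ν, hlen, rfl⟩ := ha
    exact ⟨μ.len, F.word_mem_blockDec μ.len 0 μ.len μ ν rfl hlen.symm (by omega)⟩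
  | zero => exact ⟨0, zero_mem _⟩
  | add a b _ _ ha hb =>
    obtain ⟨K1, h1⟩ := ha
    obtain ⟨K2, h2⟩ := hb
    exact ⟨max K1 K2, add_mem (F.blockDec_mono (le_max_left _ _) h1)
      (F.blockDec_mono (le_max_right _ _) h2)⟩
  | smul c a _ ha =>
    obtain ⟨K, h⟩ := ha
    exact ⟨K, Submodule.smul_mem _ _ h⟩

lemma orth_conj {x z : A} (h : star x * z = 0) : (x * star x) * (z * star z) = 0 := by
  have he : x * star x * (z * star z) = x * (star x * z) * star z := by noncomm_ring
  rw [he, h, mul_zero, zero_mul]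

lemma norm_lam_blockDec (hu : F.IsUE u) {lam : A →⋆ₐ[ℂ] A} (hlam : F.IsLambdaU u lam)
    {K : ℕ} {x : A} (hx : x ∈ F.blockDec K) : ‖lam x‖ = ‖x‖ := by
  obtain ⟨y, hy, rfl⟩ := hx
  rw [map_sum]
  set s := Finset.range (K+1) with hs
  have hmem : ∀ i ∈ s, i ≤ K := fun i hi => by
    simp only [hs, Finset.mem_range] at hi; omega
  have horth : ∀ i ∈ s, ∀ j ∈ s, i ≠ j →
      star (y i) * y j = 0 ∧ y i * star (y j) = 0 := fun i hi j hj hij =>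
    F.blockSpan_orth hij (hmem i hi) (hmem j hj) (hy i) (hy j)
  have horthlam : ∀ i ∈ s, ∀ j ∈ s, i ≠ j →
      star (lam (y i)) * lam (y j) = 0 ∧ lam (y i) * star (lam (y j)) = 0 := by
    intro i hi j hj hij
    constructor
    · rw [← map_star, ← map_mul, (horth i hi j hj hij).1, map_zero]
    · rw [← map_star, ← map_mul, (horth i hi j hj hij).2, map_zero]
  have hFEk : ∀ j, y j ∈ F.FEk j := fun j => F.blockSpan_le_FEk K j (hy j)
  have hn : ∀ j ∈ s, ‖lam (y j)‖ = ‖y j‖ := fun j _ => norm_lam_FEk hu hlam (hFEk j)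
  have e1 := norm_sum_sq s (fun j => lam (y j))
    (fun i hi j hj hij => (horthlam i hi j hj hij).2)
  have e2 := norm_sum_sq s y (fun i hi j hj hij => (horth i hi j hj hij).2)
  have heq : ‖∑ j ∈ s, lam (y j) * star (lam (y j))‖ = ‖∑ j ∈ s, y j * star (y j)‖ := by
    refine norm_sum_orth_eq s _ _ (fun i _ => mul_star_self_nonneg _)
      (fun i _ => mul_star_self_nonneg _) ?_ ?_ ?_
    · intro i hi j hj hij
      exact orth_conj (horthlam i hi j hj hij).1
    · intro i hi j hj hij
      exact orth_conj (horth i hi j hj hij).1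
    · intro i hi
      rw [CStarRing.norm_self_mul_star, CStarRing.norm_self_mul_star, hn i hi]
  have hnn1 : (0:ℝ) ≤ ‖∑ j ∈ s, lam (y j)‖ := norm_nonneg _
  have hnn2 : (0:ℝ) ≤ ‖∑ j ∈ s, y j‖ := norm_nonneg _
  nlinarith [e1, e2, heq]

lemma norm_lam_feSpan (hu : F.IsUE u) {lam : A →⋆ₐ[ℂ] A} (hlam : F.IsLambdaU u lam)
    {x : A} (hx : x ∈ F.feSpan) : ‖lam x‖ = ‖x‖ := by
  obtain ⟨K, hK⟩ := F.feSpan_mem_blockDec hx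
  exact norm_lam_blockDec hu hlam hK

lemma norm_lam_FE (hu : F.IsUE u) {lam : A →⋆ₐ[ℂ] A} (hlam : F.IsLambdaU u lam)
    {x : A} (hx : x ∈ F.FE) : ‖lam x‖ = ‖x‖ := by
  rw [F.fe_eq_closure_feSpan] at hx
  obtain ⟨seq, hseq, hlim⟩ := mem_closure_iff_seq_limit.mp hx
  have hcont : Continuous lam := hom_continuous lam
  have h1 : Filter.Tendsto (fun n => ‖lam (seq n)‖) Filter.atTop (nhds ‖lam x‖) :=
    ((hcont.tendsto x).comp hlim).norm
  have h2 : Filter.Tendsto (fun n => ‖seq n‖) Filter.atTop (nhds ‖x‖) := hlim.norm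
  have hEq : (fun n => ‖lam (seq n)‖) = fun n => ‖seq n‖ := by
    funext n
    exact norm_lam_feSpan hu hlam (hseq n)
  rw [hEq] at h1
  exact tendsto_nhds_unique h1 h2

lemma lam_inj_FE (hu : F.IsUE u) {lam : A →⋆ₐ[ℂ] A} (hlam : F.IsLambdaU u lam)
    {x : A} (hx : x ∈ F.FE) (hzero : lam x = 0) : x = 0 := by
  have := norm_lam_FE hu hlam hx
  rw [hzero, norm_zero] at this
  exact norm_eq_zero.mp this.symm

end FEIso

section GaugeAction

lemma zc_comm_P (t : ℝ) (v : G.V) : (zc t • (1:A)) * F.P v = F.P v * (zc t • (1:A)) := by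
  rw [smul_mul_assoc, one_mul, mul_smul_comm, mul_one]

/-- The gauge endomorphism `γ_t`. -/
noncomputable def gauge (hGA : IsGraphCStarAlgebra G A F) (t : ℝ) : A →⋆ₐ[ℂ] A :=
  (twist_hom_exists hGA (zc_smul_one_unitary t) (zc_comm_P t)).choose

lemma gauge_P (hGA : IsGraphCStarAlgebra G A F) (t : ℝ) (v : G.V) :
    gauge hGA t (F.P v) = F.P v :=
  (twist_hom_exists hGA (zc_smul_one_unitary t) (zc_comm_P t)).choose_spec.1 v

lemma gauge_S (hGA : IsGraphCStarAlgebra G A F) (t : ℝ) (e : G.E) :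
    gauge hGA t (F.S e) = zc t • F.S e := by
  have := (twist_hom_exists hGA (zc_smul_one_unitary t) (zc_comm_P t)).choose_spec.2 e
  rw [smul_mul_assoc, one_mul] at this
  exact this

lemma gauge_sFrom (hGA : IsGraphCStarAlgebra G A F) (t : ℝ) (v : G.V) (l : List G.E) :
    gauge hGA t (F.sFrom v l) = (zc t ^ l.length) • F.sFrom v l := by
  induction l generalizing v with
  | nil => simp [gauge_P hGA t v]
  | cons e m ih =>
    rw [sFrom_cons, map_mul, gauge_S hGA t e, ih, smul_mul_smul_comm, List.length_cons,
      pow_succ]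
    ring_nf

lemma gauge_word_eq (hGA : IsGraphCStarAlgebra G A F) (t : ℝ) {μ ν : G.Path}
    (hlen : μ.len = ν.len) :
    gauge hGA t (F.sPath μ * star (F.sPath ν)) = F.sPath μ * star (F.sPath ν) := by
  have e1 : gauge hGA t (F.sPath μ) = (zc t ^ μ.len) • F.sPath μ := gauge_sFrom hGA t _ _
  have e2 : gauge hGA t (F.sPath ν) = (zc t ^ ν.len) • F.sPath ν := gauge_sFrom hGA t _ _
  rw [map_mul, map_star, e1, e2, star_smul, smul_mul_smul_comm, hlen, RCLike.star_def]
  have hone : zc t ^ ν.len * (starRingEnd ℂ) (zc t ^ ν.len) = 1 := by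
    rw [zc_pow, ← Complex.exp_conj, ← Complex.exp_add]
    have hc : (starRingEnd ℂ) (2 * Real.pi * t * Complex.I * ν.len)
        = -(2 * Real.pi * t * Complex.I * ν.len) := by
      have he : (2 * Real.pi * t * Complex.I * ν.len : ℂ)
          = ((2 * Real.pi * t * ν.len : ℝ) : ℂ) * Complex.I := by push_cast; ring
      rw [he, map_mul, Complex.conj_ofReal, Complex.conj_I]
      push_cast; ring
    rw [hc, add_neg_cancel, Complex.exp_zero]
  rw [hone, one_smul]

lemma gauge_fix_FE (hGA : IsGraphCStarAlgebra G A F) (t : ℝ) {a : A} (ha : a ∈ F.FE) :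
    gauge hGA t a = a := by
  have hsub : (F.feSpan : Set A) ⊆ {x | gauge hGA t x = x} := by
    intro x hx
    induction hx using Submodule.span_induction with
    | mem a ha' =>
      obtain ⟨μ, ν, hlen, rfl⟩ := ha'
      exact gauge_word_eq hGA t hlen
    | zero => simp
    | add a b _ _ ha' hb' => simp only [Set.mem_setOf_eq] at *; rw [map_add, ha', hb']
    | smul c a _ ha' => simp only [Set.mem_setOf_eq] at *; rw [map_smul, ha']
  have hclosed : IsClosed {x : A | gauge hGA t x = x} :=
    isClosed_eq (hom_continuous _) continuous_id
  rw [F.fe_eq_closure_feSpan] at ha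
  exact closure_minimal hsub hclosed ha

lemma gauge_lam_comm (hGA : IsGraphCStarAlgebra G A F) {u : A} (hu : F.IsUE u)
    (huF : u ∈ F.FE) {lam : A →⋆ₐ[ℂ] A} (hlam : F.IsLambdaU u lam) (t : ℝ) :
    (gauge hGA t).comp lam = lam.comp (gauge hGA t) := by
  have hw : (zc t • u) ∈ unitary A := by
    have : zc t • u = (zc t • (1:A)) * u := by rw [smul_mul_assoc, one_mul]
    rw [this]
    exact mul_mem (zc_smul_one_unitary t) hu.1
  have hwP : ∀ v, (zc t • u) * F.P v = F.P v * (zc t • u) := by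
    intro v
    rw [smul_mul_assoc, mul_smul_comm, hu.2 v]
  refine twist_hom_unique hGA hw hwP _ _ ?_ ?_ ?_ ?_
  · intro v
    show gauge hGA t (lam (F.P v)) = F.P v
    rw [hlam.2 v, gauge_P]
  · intro e
    show gauge hGA t (lam (F.S e)) = (zc t • u) * F.S e
    rw [hlam.1 e, map_mul, gauge_fix_FE hGA t huF, gauge_S, mul_smul_comm, smul_mul_assoc]
  · intro v
    show lam (gauge hGA t (F.P v)) = F.P v
    rw [gauge_P, hlam.2 v]
  · intro e
    show lam (gauge hGA t (F.S e)) = (zc t • u) * F.S e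
    rw [gauge_S, map_smul, hlam.1 e, smul_mul_assoc]

lemma gauge_zero_eq_id (hGA : IsGraphCStarAlgebra G A F) (a : A) : gauge hGA 0 a = a := by
  have h1 : (1:A) ∈ unitary A := one_mem _
  have hwP : ∀ v, (1:A) * F.P v = F.P v * (1:A) := by simp
  have := twist_hom_unique hGA h1 hwP (gauge hGA 0) (StarAlgHom.id ℂ A)
    (fun v => gauge_P hGA 0 v)
    (fun e => by rw [gauge_S, zc_zero, one_smul, one_mul])
    (fun v => rfl) (fun e => by rw [one_mul]; rfl)
  rw [this]
  rfl

lemma gauge_continuous (hGA : IsGraphCStarAlgebra G A F) (a : A) :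
    Continuous fun t => gauge hGA t a := by
  set Sc : Set A := {x | Continuous fun t => gauge hGA t x} with hSc
  have hclosed : IsClosed Sc := by
    refine isClosed_of_closure_subset ?_
    intro x hx
    obtain ⟨seq, hseq, hlim⟩ := mem_closure_iff_seq_limit.mp hx
    have hTU : TendstoUniformly (fun n t => gauge hGA t (seq n))
        (fun t => gauge hGA t x) Filter.atTop := by
      rw [Metric.tendstoUniformly_iff]
      intro ε hε
      have : Filter.Tendsto (fun n => ‖seq n - x‖) Filter.atTop (nhds 0) := by
        have := hlim.sub (tendsto_const_nhds (x := x))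
        simpa using this.norm
      have hev : ∀ᶠ n in Filter.atTop, ‖seq n - x‖ < ε := by
        exact this.eventually_lt_const hε
      refine hev.mono fun n hn t => ?_
      have : dist (gauge hGA t x) (gauge hGA t (seq n)) = ‖gauge hGA t (x - seq n)‖ := by
        rw [dist_eq_norm, ← map_sub]
      rw [this]
      calc ‖gauge hGA t (x - seq n)‖ ≤ ‖x - seq n‖ :=
            NonUnitalStarAlgHom.norm_apply_le _ _
        _ = ‖seq n - x‖ := by rw [norm_sub_rev]
        _ < ε := hn
    exact hTU.continuous (Filter.Eventually.of_forall fun n => hseq n).frequently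
  have hadj : ∀ x ∈ StarAlgebra.adjoin ℂ (Set.range F.P ∪ Set.range F.S), x ∈ Sc := by
    intro x hx
    induction hx using StarAlgebra.adjoin_induction with
    | mem y hy =>
      rcases hy with ⟨v, rfl⟩ | ⟨e, rfl⟩
      · show Continuous fun t => gauge hGA t (F.P v)
        simp only [gauge_P]
        exact continuous_const
      · show Continuous fun t => gauge hGA t (F.S e)
        simp only [gauge_S]
        exact zc_continuous.smul continuous_const
    | algebraMap r =>
      show Continuous fun t => gauge hGA t (algebraMap ℂ A r)
      simp only [AlgHomClass.commutes]
      exact continuous_const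
    | add y z _ _ hy hz =>
      show Continuous fun t => gauge hGA t (y + z)
      simp only [map_add]
      exact hy.add hz
    | mul y z _ _ hy hz =>
      show Continuous fun t => gauge hGA t (y * z)
      simp only [map_mul]
      exact hy.mul hz
    | star y _ hy =>
      show Continuous fun t => gauge hGA t (star y)
      simp only [map_star]
      exact hy.star
  have htop : a ∈ closure (StarAlgebra.adjoin ℂ (Set.range F.P ∪ Set.range F.S) : Set A) := by
    have h := hGA.generates
    have : a ∈ (StarAlgebra.adjoin ℂ (Set.range F.P ∪ Set.range F.S)).topologicalClosure := by
      rw [h]; trivial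
    exact this
  exact closure_minimal hadj hclosed htop

end GaugeAction

section CondExpSec

lemma rsmul_nonneg {x : A} (hx : 0 ≤ x) {r : ℝ} (hr : 0 ≤ r) : 0 ≤ r • x := by
  have key : 0 ≤ star (((Real.sqrt r : ℝ) : ℂ) • (1:A)) * x *
      (((Real.sqrt r : ℝ) : ℂ) • (1:A)) := star_left_conjugate_nonneg hx _
  have he : star (((Real.sqrt r : ℝ) : ℂ) • (1:A)) * x * (((Real.sqrt r : ℝ) : ℂ) • (1:A))
      = r • x := by
    rw [star_smul, star_one, RCLike.star_def, Complex.conj_ofReal, smul_mul_assoc, one_mul,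
      mul_smul_comm, mul_one, smul_smul,
      show ((Real.sqrt r : ℝ):ℂ) * ((Real.sqrt r : ℝ):ℂ) = ((r : ℝ) : ℂ) by
        rw [← Complex.ofReal_mul, Real.mul_self_sqrt hr],
      Complex.coe_smul]
  rwa [he] at key

lemma cone_convex : Convex ℝ {x : A | 0 ≤ x} := by
  intro x hx y hy a b ha hb _
  exact add_nonneg (rsmul_nonneg hx ha) (rsmul_nonneg hy hb)

lemma interval_integral_nonneg {g : ℝ → A} (hg : Continuous g) (hpos : ∀ t, 0 ≤ g t)
    {a b : ℝ} (hab : a ≤ b) : 0 ≤ ∫ t in a..b, g t := by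
  rcases eq_or_lt_of_le hab with rfl | hlt
  · simp
  · rw [intervalIntegral.integral_of_le hab]
    have hne : MeasureTheory.volume (Set.Ioc a b) ≠ 0 := by
      rw [Real.volume_Ioc]
      simp only [ne_eq, ENNReal.ofReal_eq_zero, not_le]
      linarith
    have hfin : MeasureTheory.volume (Set.Ioc a b) ≠ ⊤ := by
      rw [Real.volume_Ioc]; exact ENNReal.ofReal_ne_top
    have hint : MeasureTheory.IntegrableOn g (Set.Ioc a b) MeasureTheory.volume :=
      (hg.intervalIntegrable a b).1
    have hmem := (cone_convex (A := A)).set_average_mem CStarAlgebra.isClosed_nonneg hne hfin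
      (MeasureTheory.ae_of_all _ fun t => hpos t) hint
    have havg := MeasureTheory.setAverage_eq g (Set.Ioc a b)
      (μ := MeasureTheory.volume)
    have htr : (MeasureTheory.volume (Set.Ioc a b)).toReal ≠ 0 := by
      rw [Real.volume_Ioc, ENNReal.toReal_ofReal (by linarith)]
      linarith
    have hInt : ∫ t in Set.Ioc a b, g t ∂MeasureTheory.volume
        = (MeasureTheory.volume (Set.Ioc a b)).toReal • ⨍ t in Set.Ioc a b, g t := by
      rw [havg, smul_smul, MeasureTheory.measureReal_def, mul_inv_cancel₀ htr, one_smul]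
    rw [hInt]
    exact rsmul_nonneg hmem ENNReal.toReal_nonneg

/-- The conditional expectation onto `F_E`. -/
noncomputable def condExp (F : CKFamily G A) (hGA : IsGraphCStarAlgebra G A F) (a : A) : A :=
  ∫ t in (0:ℝ)..1, gauge hGA t a

lemma condExp_word_mem (hGA : IsGraphCStarAlgebra G A F) (μ ν : G.Path) :
    F.condExp hGA (F.sPath μ * star (F.sPath ν)) ∈ F.feSpan := by
  by_cases hlen : μ.len = ν.len
  · have hconst : F.condExp hGA (F.sPath μ * star (F.sPath ν))
        = F.sPath μ * star (F.sPath ν) := by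
      unfold condExp
      have hfun : (fun t => gauge hGA t (F.sPath μ * star (F.sPath ν)))
          = fun _ => F.sPath μ * star (F.sPath ν) :=
        funext fun t => gauge_word_eq hGA t hlen
      rw [hfun, intervalIntegral.integral_const]
      simp
    rw [hconst]
    exact Submodule.subset_span ⟨μ, ν, hlen, rfl⟩
  · set d : ℤ := (μ.len : ℤ) - (ν.len : ℤ) with hd
    have hdne : d ≠ 0 := by
      simp only [hd, sub_ne_zero]
      exact_mod_cast hlen
    set c : ℂ := 2 * Real.pi * Complex.I * d with hcdef
    have hcne : c ≠ 0 := by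
      simp only [hcdef]
      refine mul_ne_zero (mul_ne_zero (mul_ne_zero two_ne_zero ?_) Complex.I_ne_zero) ?_
      · exact_mod_cast Complex.ofReal_ne_zero.mpr Real.pi_ne_zero
      · exact_mod_cast hdne
    have hterm : ∀ t : ℝ, gauge hGA t (F.sPath μ * star (F.sPath ν))
        = Complex.exp (c * t) • (F.sPath μ * star (F.sPath ν)) := by
      intro t
      have e1 : gauge hGA t (F.sPath μ) = (zc t ^ μ.len) • F.sPath μ := gauge_sFrom hGA t _ _
      have e2 : gauge hGA t (F.sPath ν) = (zc t ^ ν.len) • F.sPath ν := gauge_sFrom hGA t _ _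
      rw [map_mul, map_star, e1, e2, star_smul, smul_mul_smul_comm, RCLike.star_def]
      congr 1
      rw [zc_pow, zc_pow, ← Complex.exp_conj, ← Complex.exp_add]
      have hc : (starRingEnd ℂ) (2 * Real.pi * t * Complex.I * ν.len)
          = -(2 * Real.pi * t * Complex.I * ν.len) := by
        have he : (2 * Real.pi * t * Complex.I * ν.len : ℂ)
            = ((2 * Real.pi * t * ν.len : ℝ) : ℂ) * Complex.I := by push_cast; ring
        rw [he, map_mul, Complex.conj_ofReal, Complex.conj_I]
        push_cast; ring
      rw [hc]
      congr 1
      simp only [hcdef, hd]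
      push_cast
      ring
    have hint : F.condExp hGA (F.sPath μ * star (F.sPath ν))
        = (∫ t in (0:ℝ)..1, Complex.exp (c * t)) • (F.sPath μ * star (F.sPath ν)) := by
      unfold condExp
      rw [funext hterm, intervalIntegral.integral_smul_const]
    have hzero : (∫ t in (0:ℝ)..1, Complex.exp (c * t)) = 0 := by
      rw [integral_exp_mul_complex hcne]
      have h1 : c * (1:ℝ) = (d : ℂ) * (2 * Real.pi * Complex.I) := by
        simp only [hcdef]; push_cast; ring
      have h0 : c * (0:ℝ) = 0 := by simp
      rw [h1, h0, Complex.exp_int_mul_two_pi_mul_I, Complex.exp_zero, sub_self, zero_div]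
    rw [hint, hzero, zero_smul]
    exact zero_mem _

lemma condExp_zero (hGA : IsGraphCStarAlgebra G A F) : F.condExp hGA 0 = 0 := by
  unfold condExp
  simp

lemma condExp_wordSpan (hGA : IsGraphCStarAlgebra G A F) {x : A} (hx : x ∈ F.wordSpan) :
    F.condExp hGA x ∈ F.feSpan := by
  induction hx using Submodule.span_induction with
  | mem a ha =>
    obtain ⟨μ, ν, rfl⟩ := ha
    exact condExp_word_mem hGA μ ν
  | zero => rw [condExp_zero hGA]; exact zero_mem _
  | add a b _ _ ha hb =>
    have : F.condExp hGA (a + b) = F.condExp hGA a + F.condExp hGA b := by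
      unfold condExp
      rw [← intervalIntegral.integral_add ((gauge_continuous hGA a).intervalIntegrable _ _)
        ((gauge_continuous hGA b).intervalIntegrable _ _)]
      congr 1
      funext t
      rw [map_add]
    rw [this]; exact add_mem ha hb
  | smul r a _ ha =>
    have : F.condExp hGA (r • a) = r • F.condExp hGA a := by
      unfold condExp
      rw [← intervalIntegral.integral_smul]
      congr 1
      funext t
      rw [map_smul]
    rw [this]; exact Submodule.smul_mem _ _ ha

/-- The word span as a star subalgebra. -/
def wordAlg (F : CKFamily G A) (hone : (1:A) ∈ F.wordSpan) : StarSubalgebra ℂ A where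
  carrier := F.wordSpan
  mul_mem' := fun ha hb => F.mul_mem_wordSpan ha hb
  one_mem' := hone
  add_mem' := fun ha hb => add_mem ha hb
  zero_mem' := zero_mem _
  algebraMap_mem' := fun r => by
    simp only [Algebra.algebraMap_eq_smul_one]
    exact Submodule.smul_mem _ _ hone
  star_mem' := fun ha => F.star_mem_wordSpan ha

lemma mem_closure_wordSpan (hGA : IsGraphCStarAlgebra G A F) (a : A) :
    a ∈ closure (F.wordSpan : Set A) := by
  have hone : (1:A) ∈ F.wordSpan := by
    rw [← hGA.sum_one]
    exact Submodule.sum_mem _ fun v _ => F.p_mem_wordSpan v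
  have hle : StarAlgebra.adjoin ℂ (Set.range F.P ∪ Set.range F.S) ≤ F.wordAlg hone := by
    refine StarAlgebra.adjoin_le ?_
    rintro x (⟨v, rfl⟩ | ⟨e, rfl⟩)
    · exact F.p_mem_wordSpan v
    · exact F.s_mem_wordSpan e
  have htop : a ∈ closure
      (StarAlgebra.adjoin ℂ (Set.range F.P ∪ Set.range F.S) : Set A) := by
    have h := hGA.generates
    have : a ∈ (StarAlgebra.adjoin ℂ (Set.range F.P ∪ Set.range F.S)).topologicalClosure := by
      rw [h]; trivial
    exact this
  exact closure_mono hle htop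

lemma condExp_mem_FE (hGA : IsGraphCStarAlgebra G A F) (a : A) :
    F.condExp hGA a ∈ F.FE := by
  obtain ⟨seq, hseq, hlim⟩ := mem_closure_iff_seq_limit.mp (mem_closure_wordSpan hGA a)
  have hFEmem : ∀ n, F.condExp hGA (seq n) ∈ F.FE := by
    intro n
    rw [F.fe_eq_closure_feSpan]
    exact subset_closure (condExp_wordSpan hGA (hseq n))
  have htend : Filter.Tendsto (fun n => F.condExp hGA (seq n)) Filter.atTop
      (nhds (F.condExp hGA a)) := by
    rw [tendsto_iff_norm_sub_tendsto_zero]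
    have hbound : ∀ n, ‖F.condExp hGA (seq n) - F.condExp hGA a‖ ≤ ‖seq n - a‖ := by
      intro n
      have hdiff : F.condExp hGA (seq n) - F.condExp hGA a
          = ∫ t in (0:ℝ)..1, gauge hGA t (seq n - a) := by
        unfold condExp
        rw [← intervalIntegral.integral_sub ((gauge_continuous hGA _).intervalIntegrable _ _)
          ((gauge_continuous hGA _).intervalIntegrable _ _)]
        congr 1
        funext t
        rw [map_sub]
      rw [hdiff]
      have := intervalIntegral.norm_integral_le_of_norm_le_const
        (C := ‖seq n - a‖) (f := fun t => gauge hGA t (seq n - a)) (a := (0:ℝ)) (b := 1)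
        (fun t _ => NonUnitalStarAlgHom.norm_apply_le _ _)
      simpa using this
    have hn0 : Filter.Tendsto (fun n => ‖seq n - a‖) Filter.atTop (nhds 0) := by
      have := hlim.sub (tendsto_const_nhds (x := a))
      simpa using this.norm
    exact squeeze_zero (fun n => norm_nonneg _) hbound hn0
  have hclosed : IsClosed (F.FE) := by
    rw [F.fe_eq_closure_feSpan]
    exact isClosed_closure
  exact hclosed.mem_of_tendsto htend (Filter.Eventually.of_forall hFEmem)

lemma condExp_lam_comm (hGA : IsGraphCStarAlgebra G A F) {u : A} (hu : F.IsUE u)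
    (huF : u ∈ F.FE) {lam : A →⋆ₐ[ℂ] A} (hlam : F.IsLambdaU u lam) (a : A) :
    lam (F.condExp hGA a) = F.condExp hGA (lam a) := by
  let L : A →L[ℝ] A :=
    { toFun := lam
      map_add' := fun x y => map_add lam x y
      map_smul' := fun r x => by
        simp only [RingHom.id_apply]
        rw [← Complex.coe_smul, map_smul, Complex.coe_smul]
      cont := hom_continuous lam }
  have hL : ∀ x, L x = lam x := fun x => rfl
  unfold condExp
  rw [← hL, ← ContinuousLinearMap.intervalIntegral_comp_comm L
    ((gauge_continuous hGA a).intervalIntegrable _ _)]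
  congr 1
  funext t
  have hcomm := gauge_lam_comm hGA hu huF hlam t
  have := DFunLike.congr_fun hcomm a
  simp only [StarAlgHom.comp_apply] at this
  rw [hL]
  exact this.symm

lemma condExp_faithful (hGA : IsGraphCStarAlgebra G A F) {a : A}
    (hzero : F.condExp hGA (star a * a) = 0) : a = 0 := by
  set b := star a * a with hb
  have hgcont := gauge_continuous hGA b
  have hgpos : ∀ t, 0 ≤ gauge hGA t b := by
    intro t
    have : gauge hGA t b = star (gauge hGA t a) * gauge hGA t a := by
      rw [hb, map_mul, map_star]
    rw [this]
    exact star_mul_self_nonneg _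
  by_contra hne
  have hb0 : b ≠ 0 := fun h => hne (by
    rw [hb] at h
    exact (CStarRing.star_mul_self_eq_zero_iff a).mp h)
  set c := ‖b‖ with hc
  have hcpos : 0 < c := norm_pos_iff.mpr hb0
  have hcont0 : ContinuousAt (fun t => gauge hGA t b) 0 := hgcont.continuousAt
  obtain ⟨δ, hδpos, hδ⟩ := Metric.continuousAt_iff.mp hcont0 (c/2) (by positivity)
  set δ' := min (δ/2) 1 with hδ'
  have hδ'pos : 0 < δ' := lt_min (by positivity) one_pos
  have hδ'le1 : δ' ≤ 1 := min_le_right _ _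
  have hball : ∀ t ∈ Set.uIoc (0:ℝ) δ', ‖gauge hGA t b - b‖ ≤ c/2 := by
    intro t ht
    rw [Set.uIoc_of_le hδ'pos.le] at ht
    have hdist : dist t 0 < δ := by
      rw [Real.dist_eq, sub_zero, abs_of_pos ht.1]
      have h1 : t ≤ δ' := ht.2
      have h2 : δ' ≤ δ/2 := min_le_left _ _
      linarith
    have hd := hδ hdist
    rw [dist_eq_norm, gauge_zero_eq_id hGA b] at hd
    exact hd.le
  set X := ∫ t in (0:ℝ)..δ', gauge hGA t b with hX
  set Y := ∫ t in δ'..(1:ℝ), gauge hGA t b with hY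
  have hXY : X + Y = 0 := by
    rw [hX, hY, intervalIntegral.integral_add_adjacent_intervals
      (hgcont.intervalIntegrable _ _) (hgcont.intervalIntegrable _ _)]
    exact hzero
  have hXpos : 0 ≤ X := interval_integral_nonneg hgcont hgpos hδ'pos.le
  have hYpos : 0 ≤ Y := interval_integral_nonneg hgcont hgpos hδ'le1
  have hX0 : X = 0 := by
    have h1 : X = -Y := eq_neg_of_add_eq_zero_left hXY
    have h2 : X ≤ 0 := h1 ▸ neg_nonpos.mpr hYpos
    exact le_antisymm h2 hXpos
  have hsplit : δ' • b = X - (∫ t in (0:ℝ)..δ', (gauge hGA t b - b)) := by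
    rw [hX, ← intervalIntegral.integral_sub (hgcont.intervalIntegrable _ _)
      ((hgcont.intervalIntegrable _ _).sub (intervalIntegrable_const))]
    have : (fun t => gauge hGA t b - (gauge hGA t b - b)) = fun _ => b := by
      funext t; abel
    rw [this, intervalIntegral.integral_const, sub_zero]
  have hRnorm : ‖∫ t in (0:ℝ)..δ', (gauge hGA t b - b)‖ ≤ (c/2) * δ' := by
    have := intervalIntegral.norm_integral_le_of_norm_le_const hball
    rwa [sub_zero, abs_of_pos hδ'pos] at this
  have hXnorm : ‖δ' • b‖ ≤ ‖X‖ + (c/2) * δ' := by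
    rw [hsplit]
    calc ‖X - ∫ t in (0:ℝ)..δ', (gauge hGA t b - b)‖
        ≤ ‖X‖ + ‖∫ t in (0:ℝ)..δ', (gauge hGA t b - b)‖ := norm_sub_le _ _
      _ ≤ ‖X‖ + (c/2) * δ' := by linarith
  rw [hX0, norm_zero, norm_smul, Real.norm_eq_abs, abs_of_pos hδ'pos] at hXnorm
  rw [← hc] at hXnorm
  nlinarith

end CondExpSec

end CKFamily

end Aux

end FinDirGraph
open FinDirGraph in
/-- Proposition 2.1 (coreinjectivity). -/
theorem stmt_19 (G : FinDirGraph)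
    (A : Type) [CStarAlgebra A] [PartialOrder A] [StarOrderedRing A]
    (F : CKFamily G A) (hGA : IsGraphCStarAlgebra G A F)
    (u : A) (hu : F.IsUE u) (huF : u ∈ F.FE)
    (lam : A →⋆ₐ[ℂ] A) (hlam : F.IsLambdaU u lam) :
    Function.Injective lam := by
  have hker : ∀ a : A, lam a = 0 → a = 0 := by
    intro a ha
    have hb : lam (star a * a) = 0 := by
      rw [map_mul, map_star, ha, star_zero, zero_mul]
    have hcl : lam (F.condExp hGA (star a * a)) = 0 := by
      rw [CKFamily.condExp_lam_comm hGA hu huF hlam, hb, CKFamily.condExp_zero hGA]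
    have hFE := CKFamily.condExp_mem_FE hGA (star a * a)
    have h0 := CKFamily.lam_inj_FE hu hlam hFE hcl
    exact CKFamily.condExp_faithful hGA h0
  intro x y hxy
  have h : lam (x - y) = 0 := by rw [map_sub, hxy, sub_self]
  exact sub_eq_zero.mp (hker _ h)
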